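/- arXiv:1603.08209 — 14 statements merged into one kernel-verified Lean document; each statement's English description precedes it below -/
import Mathlib

section
/- For every real number p with |p| < 1 and every real number x, the series ∑_{k=1}^∞ p^k · sin(kx)/k converges and arctan( p·sin x / (1 − p·cos x) ) = ∑_{k=1}^∞ p^k · sin(kx)/k, where arctan denotes the principal branch of the inverse tangent. -/
open Complex Real

lemma arg_eq_arctan' {w : ℂ} (h : 0 < w.re) :
    Complex.arg w = Real.arctan (w.im / w.re) := by
  rw [← Complex.tan_arg, Real.arctan_tan]
  · exact Complex.neg_pi_div_two_lt_arg_iff.mpr (Or.inl h)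
  · exact Complex.arg_lt_pi_div_two_iff.mpr (Or.inl h)

/-- The arctangent generator identity: for `|p| < 1` and any real `x`, the series
`∑_{k=1}^∞ p^k sin(kx)/k` converges, with sum `arctan(p sin x / (1 - p cos x))`. -/
theorem stmt_0 (p x : ℝ) (hp : |p| < 1) :
    HasSum (fun k : ℕ => p ^ (k + 1) * Real.sin ((k + 1 : ℝ) * x) / (k + 1))
      (Real.arctan (p * Real.sin x / (1 - p * Real.cos x))) := by
  set z : ℂ := (p : ℂ) * Complex.exp (x * I) with hz
  have hnorm : ‖z‖ < 1 := by
    rw [hz, norm_mul]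
    simp only [Complex.norm_exp]
    simpa using hp
  have h1 : HasSum (fun n : ℕ => z ^ n / n) (-Complex.log (1 - z)) :=
    Complex.hasSum_taylorSeries_neg_log hnorm
  have h2 : HasSum (fun n : ℕ => z ^ (n + 1) / (n + 1))
      (-Complex.log (1 - z) - ∑ i ∈ Finset.range 1, z ^ i / i) := by
    have := (hasSum_nat_add_iff' (f := fun n : ℕ => z ^ n / n) 1).mpr h1
    convert this using 2 with n
    · rfl
    push_cast
    ring
  simp only [Finset.range_one, Finset.sum_singleton, Nat.cast_zero, div_zero, sub_zero] at h2
  have h3 := Complex.hasSum_im h2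
  have hre : (1 - z).re = 1 - p * Real.cos x := by
    simp [hz, Complex.exp_mul_I, Complex.sub_re, Complex.mul_re, Complex.cos_ofReal_re, Complex.sin_ofReal_re]
  have him : (1 - z).im = -(p * Real.sin x) := by
    simp [hz, Complex.exp_mul_I, Complex.sub_im, Complex.mul_im, Complex.cos_ofReal_re, Complex.sin_ofReal_re]
  have hrepos : 0 < (1 - z).re := by
    rw [hre]
    have : p * Real.cos x ≤ |p * Real.cos x| := le_abs_self _
    have h4 : |p * Real.cos x| < 1 := by
      rw [abs_mul]
      calc |p| * |Real.cos x| ≤ |p| * 1 :=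
            mul_le_mul_of_nonneg_left (Real.abs_cos_le_one x) (abs_nonneg p)
        _ = |p| := mul_one _
        _ < 1 := hp
    linarith
  have hsum : (-Complex.log (1 - z)).im
      = Real.arctan (p * Real.sin x / (1 - p * Real.cos x)) := by
    rw [Complex.neg_im, Complex.log_im, arg_eq_arctan' hrepos, him, hre, neg_div, Real.arctan_neg,
      neg_neg]
  rw [hsum] at h3
  convert h3 using 2 with k
  have hzk : z ^ (k + 1) = (p : ℂ) ^ (k + 1) * Complex.exp ((((k + 1 : ℝ) * x : ℝ) : ℂ) * I) := by
    rw [hz, mul_pow, ← Complex.exp_nat_mul]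
    push_cast
    ring_nf
  rw [hzk, show ((k : ℂ) + 1) = (((k : ℝ) + 1 : ℝ) : ℂ) by push_cast; ring,
    ← Complex.ofReal_pow, Complex.div_ofReal_im, Complex.im_ofReal_mul,
    Complex.exp_ofReal_mul_I_im]
end

section
/- For every real number p with |p| < 1 and every real number x, the series ∑_{k=1}^∞ p^k · cos(kx)/k converges and −(1/2)·ln(1 − 2p·cos x + p²) = ∑_{k=1}^∞ p^k · cos(kx)/k. -/
/-- The logarithm generator identity: for `|p| < 1` and any real `x`, the series
`∑_{k=1}^∞ p^k cos(kx)/k` converges, with sum `-(1/2) ln(1 - 2p cos x + p^2)`. -/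
theorem stmt_1 (p x : ℝ) (hp : |p| < 1) :
    HasSum (fun k : ℕ => p ^ (k + 1) * Real.cos ((k + 1 : ℝ) * x) / (k + 1))
      (-(1 / 2) * Real.log (1 - 2 * p * Real.cos x + p ^ 2)) := by
  set z : ℂ := p * Complex.exp (x * Complex.I) with hz
  have hnz : ‖z‖ < 1 := by
    rw [hz, norm_mul, Complex.norm_exp]
    simpa [Complex.norm_real] using hp
  have H := Complex.hasSum_taylorSeries_neg_log hnz
  have Hre : HasSum (fun n : ℕ => ((z ^ n / n : ℂ)).re) (-Complex.log (1 - z)).re :=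
    Complex.hasSum_re H
  have hterm : ∀ n : ℕ, ((z ^ n / n : ℂ)).re = p ^ n * Real.cos (n * x) / n := by
    intro n
    have hzn : z ^ n = ((p ^ n : ℝ) : ℂ) * Complex.exp (((n : ℝ) * x : ℝ) * Complex.I) := by
      rw [hz, mul_pow, ← Complex.exp_nat_mul]
      push_cast
      ring_nf
    rw [hzn, show ((n : ℂ)) = (((n : ℝ) : ℂ)) from by norm_cast,
      Complex.div_ofReal_re, Complex.re_ofReal_mul, Complex.exp_ofReal_mul_I_re]
  have Hre' : HasSum (fun n : ℕ => p ^ n * Real.cos (n * x) / n)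
      (-Complex.log (1 - z)).re :=
    Hre.congr_fun fun n => (hterm n).symm
  have hval : (-Complex.log (1 - z)).re
      = -(1 / 2) * Real.log (1 - 2 * p * Real.cos x + p ^ 2) := by
    have habs : ‖1 - z‖ ^ 2 = 1 - 2 * p * Real.cos x + p ^ 2 := by
      rw [Complex.sq_norm, Complex.normSq_apply]
      have h1 : (1 - z).re = 1 - p * Real.cos x := by
        simp [hz, Complex.exp_ofReal_mul_I_re]
      have h2 : (1 - z).im = -(p * Real.sin x) := by
        simp [hz, Complex.exp_ofReal_mul_I_im]
      rw [h1, h2]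
      nlinarith [Real.sin_sq_add_cos_sq x]
    have hpc : p * Real.cos x ≤ |p| := by
      calc p * Real.cos x ≤ |p * Real.cos x| := le_abs_self _
        _ = |p| * |Real.cos x| := abs_mul _ _
        _ ≤ |p| * 1 := by
            exact mul_le_mul_of_nonneg_left (Real.abs_cos_le_one x) (abs_nonneg p)
        _ = |p| := mul_one _
    have hpos : (0:ℝ) < 1 - 2 * p * Real.cos x + p ^ 2 := by
      nlinarith [sq_nonneg (1 - |p|), sq_abs p, abs_nonneg p]
    have habsne : ‖1 - z‖ ≠ 0 := by
      intro h
      rw [h] at habs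
      nlinarith
    rw [Complex.neg_re, Complex.log_re, ← habs, Real.log_pow]
    push_cast
    ring
  rw [hval] at Hre'
  have key := (hasSum_nat_add_iff'
    (f := fun n : ℕ => p ^ n * Real.cos (n * x) / n) 1).mpr Hre'
  simp only [Finset.range_one, Finset.sum_singleton, Nat.cast_zero, zero_mul,
    Real.cos_zero, pow_zero, div_zero, sub_zero, mul_one, one_mul] at key
  convert key using 2 with k
  · rfl
  push_cast
  ring_nf
end

section
/- For every positive integer n, √n · arctan(1/√n) = (1/n) · ∑_{k=0}^∞ (1/(n²)^k) · ( n/(4k+1) − 1/(4k+3) ). -/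
open Filter Finset Topology

lemma aux_tendsto (n : ℕ) (hn : 0 < n) :
    Tendsto (fun K => ∑ i ∈ Finset.range K,
        ((-1 : ℝ)) ^ i * ((n : ℝ)⁻¹) ^ i / (2 * (i : ℝ) + 1)) atTop
      (𝓝 (Real.sqrt n * Real.arctan (1 / Real.sqrt n))) := by
  rcases eq_or_lt_of_le (show 1 ≤ n from hn) with h1 | h2
  · -- n = 1
    have : n = 1 := h1.symm
    subst this
    simpa [Real.arctan_one] using Real.tendsto_sum_pi_div_four
  · -- n ≥ 2
    have hn1 : (1 : ℝ) < (n : ℝ) := by exact_mod_cast h2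
    have hs0 : (0 : ℝ) < Real.sqrt n := Real.sqrt_pos.mpr (by linarith)
    have hs1 : (1 : ℝ) < Real.sqrt n := by
      rw [show (1:ℝ) = Real.sqrt 1 by simp]
      exact Real.sqrt_lt_sqrt (by norm_num) hn1
    have hx : ‖(1 / Real.sqrt n : ℝ)‖ < 1 := by
      rw [Real.norm_eq_abs, abs_of_pos (by positivity)]
      rw [div_lt_one hs0]; exact hs1
    have H := (Real.hasSum_arctan hx).mul_left (Real.sqrt n)
    have heq : (fun k : ℕ => Real.sqrt n *
          ((-1) ^ k * (1 / Real.sqrt n) ^ (2 * k + 1) / ((2 * k + 1 : ℕ) : ℝ)))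
        = fun i : ℕ => ((-1 : ℝ)) ^ i * ((n : ℝ)⁻¹) ^ i / (2 * (i : ℝ) + 1) := by
      funext k
      have hsq : (1 / Real.sqrt n : ℝ) ^ 2 = (n : ℝ)⁻¹ := by
        rw [div_pow, one_pow, Real.sq_sqrt (by positivity)]; simp [one_div]
      have : (1 / Real.sqrt n : ℝ) ^ (2 * k + 1)
          = ((n : ℝ)⁻¹) ^ k * (1 / Real.sqrt n) := by
        rw [pow_succ, pow_mul, hsq]
      rw [this]
      have hne : Real.sqrt n ≠ 0 := ne_of_gt hs0
      push_cast
      field_simp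
    rw [heq] at H
    exact H.tendsto_sum_nat

theorem stmt_2 (n : ℕ) (hn : 0 < n) :
    Real.sqrt n * Real.arctan (1 / Real.sqrt n) =
      (1 / (n : ℝ)) * ∑' k : ℕ, (1 / ((n : ℝ) ^ 2) ^ k) *
        ((n : ℝ) / (4 * (k : ℝ) + 1) - 1 / (4 * (k : ℝ) + 3)) := by
  have hn1 : (1 : ℝ) ≤ (n : ℝ) := by exact_mod_cast hn
  have hn0 : (0 : ℝ) < (n : ℝ) := by linarith
  set L := Real.sqrt n * Real.arctan (1 / Real.sqrt n) with hL
  set g : ℕ → ℝ := fun i => ((-1 : ℝ)) ^ i * ((n : ℝ)⁻¹) ^ i / (2 * (i : ℝ) + 1) with hg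
  set h' : ℕ → ℝ := fun k => (1 / ((n : ℝ) ^ 2)) ^ k *
      (1 / (4 * (k : ℝ) + 1) - (1 / (n : ℝ)) * (1 / (4 * (k : ℝ) + 3))) with hh'
  -- pairing identity
  have hpair : ∀ K, ∑ k ∈ Finset.range K, h' k = ∑ i ∈ Finset.range (2 * K), g i := by
    intro K
    induction K with
    | zero => simp
    | succ K ih =>
      rw [Finset.sum_range_succ, ih, show 2 * (K + 1) = 2 * K + 1 + 1 by ring,
        Finset.sum_range_succ, Finset.sum_range_succ, add_assoc]
      congr 1
      simp only [hg, hh']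
      have h1 : ((-1 : ℝ)) ^ (2 * K) = 1 := by
        rw [pow_mul]; norm_num
      have h2 : ((-1 : ℝ)) ^ (2 * K + 1) = -1 := by
        rw [pow_succ, h1]; ring
      have h3 : ((n : ℝ)⁻¹) ^ (2 * K) = (1 / ((n : ℝ) ^ 2)) ^ K := by
        rw [pow_mul]; congr 1; rw [one_div, ← inv_pow]
      have h4 : ((n : ℝ)⁻¹) ^ (2 * K + 1) = (1 / ((n : ℝ) ^ 2)) ^ K * (n : ℝ)⁻¹ := by
        rw [pow_succ, h3]
      rw [h1, h2, h3, h4]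
      push_cast
      ring
  -- nonnegativity
  have hnonneg : ∀ k, 0 ≤ h' k := by
    intro k
    apply mul_nonneg (by positivity)
    have hk1 : (0:ℝ) < 4 * (k:ℝ) + 1 := by positivity
    have hk3 : (0:ℝ) < 4 * (k:ℝ) + 3 := by positivity
    have : (1 / (n : ℝ)) * (1 / (4 * (k : ℝ) + 3)) ≤ 1 * (1 / (4 * (k : ℝ) + 1)) := by
      gcongr
      · exact div_le_one_of_le₀ hn1 (le_of_lt hn0) |>.trans_eq rfl
      · linarith
    linarith
  -- tendsto of partial sums of h'
  have htend : Tendsto (fun K => ∑ k ∈ Finset.range K, h' k) atTop (𝓝 L) := by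
    have h2K : Tendsto (fun K : ℕ => 2 * K) atTop atTop :=
      tendsto_atTop_atTop_of_monotone (fun a b hab => by omega) (fun b => ⟨b, by omega⟩)
    have hfe : (fun K => ∑ k ∈ Finset.range K, h' k)
        = (fun K => ∑ i ∈ Finset.range K, g i) ∘ (fun K : ℕ => 2 * K) :=
      funext fun K => by simpa [Function.comp] using hpair K
    rw [hfe]
    exact (aux_tendsto n hn).comp h2K
  -- summability
  have hmono : Monotone (fun K => ∑ k ∈ Finset.range K, h' k) := by
    intro a b hab
    exact Finset.sum_le_sum_of_subset_of_nonneg (Finset.range_subset_range.mpr hab)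
      (fun i _ _ => hnonneg i)
  have hbound : ∀ K, ∑ k ∈ Finset.range K, h' k ≤ L :=
    fun K => hmono.ge_of_tendsto htend K
  have hsum : Summable h' := summable_of_sum_range_le hnonneg hbound
  have hhs : HasSum h' L := (hsum.hasSum_iff_tendsto_nat).mpr htend
  -- conclude
  have hterm : (fun k : ℕ => (1 / ((n : ℝ) ^ 2) ^ k) *
      ((n : ℝ) / (4 * (k : ℝ) + 1) - 1 / (4 * (k : ℝ) + 3)))
      = fun k => (n : ℝ) * h' k := by
    funext k
    simp only [hh']
    rw [div_pow, one_pow]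
    have hk1 : (4 * (k:ℝ) + 1) ≠ 0 := by positivity
    have hk3 : (4 * (k:ℝ) + 3) ≠ 0 := by positivity
    field_simp
  rw [hterm, tsum_mul_left, hhs.tsum_eq]
  field_simp
end

section
/- For every positive integer n, n² · √3 · arctan( √3/(2n + 1) ) = (3/2) · ∑_{k=0}^∞ (1/(n³)^k) · ( n/(3k+1) − 1/(3k+2) ). -/
open MeasureTheory Set intervalIntegral

lemma quad_pos (x : ℝ) : 0 < 1 + x + x ^ 2 := by nlinarith [sq_nonneg (x + 1/2)]

lemma deriv_aux {x : ℝ} (hx : 0 ≤ x) :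
    HasDerivAt (fun y => 2 / Real.sqrt 3 * Real.arctan (Real.sqrt 3 * y / (2 + y)))
      ((1 + x + x ^ 2)⁻¹) x := by
  have h3 : (0:ℝ) < Real.sqrt 3 := Real.sqrt_pos.mpr (by norm_num)
  have h2x : (2 : ℝ) + x ≠ 0 := by positivity
  have hu : HasDerivAt (fun y => Real.sqrt 3 * y / (2 + y))
      ((Real.sqrt 3 * (2 + x) - Real.sqrt 3 * x * 1) / (2 + x) ^ 2) x := by
    exact (((hasDerivAt_id x).const_mul (Real.sqrt 3)).div
      (((hasDerivAt_id x).const_add 2)) h2x).congr_deriv (by simp)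
  have ha := (Real.hasDerivAt_arctan (Real.sqrt 3 * x / (2 + x))).comp x hu
  have := ha.const_mul (2 / Real.sqrt 3)
  refine this.congr_deriv ?_
  have hs : Real.sqrt 3 ^ 2 = 3 := Real.sq_sqrt (by norm_num)
  have hq : (0:ℝ) < 1 + (Real.sqrt 3 * x / (2 + x)) ^ 2 := by positivity
  field_simp
  linear_combination (-x ^ 2) * hs


lemma cont_quad : Continuous fun x : ℝ => (1 + x + x ^ 2)⁻¹ := by
  have : Continuous fun x : ℝ => 1 + x + x ^ 2 := by continuity
  exact this.inv₀ fun x => (quad_pos x).ne'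

lemma ftc_lemma {r : ℝ} (hr : 0 ≤ r) :
    ∫ x in (0:ℝ)..r, (1 + x + x ^ 2)⁻¹ =
      2 / Real.sqrt 3 * Real.arctan (Real.sqrt 3 * r / (2 + r)) := by
  have := intervalIntegral.integral_eq_sub_of_hasDerivAt
    (f := fun y => 2 / Real.sqrt 3 * Real.arctan (Real.sqrt 3 * y / (2 + y)))
    (f' := fun x => (1 + x + x ^ 2)⁻¹) (a := 0) (b := r)
    (fun x hx => deriv_aux (by
      rcases hx with ⟨h1, h2⟩
      simp only [min_def, max_def] at h1 h2
      split_ifs at h1 h2 <;> linarith))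
    (cont_quad.intervalIntegrable 0 r)
  simpa using this

lemma per_term {r : ℝ} (k : ℕ) :
    ∫ x in (0:ℝ)..r, x ^ (3 * k) * (1 - x) =
      r ^ (3 * k + 1) / (3 * (k:ℝ) + 1) - r ^ (3 * k + 2) / (3 * (k:ℝ) + 2) := by
  have h1 : (fun x : ℝ => x ^ (3 * k) * (1 - x)) = fun x => x ^ (3 * k) - x ^ (3 * k + 1) := by
    funext x; ring
  rw [h1, intervalIntegral.integral_sub (intervalIntegral.intervalIntegrable_pow _)
    (intervalIntegral.intervalIntegrable_pow _), integral_pow, integral_pow]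
  push_cast
  ring

lemma norm_int {r : ℝ} (hr0 : 0 < r) (hr1 : r ≤ 1) (k : ℕ) :
    ∫ x in Set.Ioc (0:ℝ) r, ‖x ^ (3 * k) * (1 - x)‖ =
      r ^ (3 * k + 1) / (3 * (k:ℝ) + 1) - r ^ (3 * k + 2) / (3 * (k:ℝ) + 2) := by
  rw [← per_term k, intervalIntegral.integral_of_le hr0.le]
  apply MeasureTheory.setIntegral_congr_fun measurableSet_Ioc
  intro x hx
  exact Real.norm_of_nonneg (mul_nonneg (pow_nonneg hx.1.le _) (by linarith [hx.2]))

lemma interchange {r : ℝ} (hr0 : 0 < r) (hr1 : r ≤ 1) :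
    ∑' k : ℕ, (r ^ (3 * k + 1) / (3 * (k:ℝ) + 1) - r ^ (3 * k + 2) / (3 * (k:ℝ) + 2)) =
      ∫ x in (0:ℝ)..r, (1 + x + x ^ 2)⁻¹ := by
  have hcont : ∀ k : ℕ, Continuous fun x : ℝ => x ^ (3 * k) * (1 - x) := by
    intro k; continuity
  have hint : ∀ k : ℕ, MeasureTheory.IntegrableOn (fun x : ℝ => x ^ (3 * k) * (1 - x))
      (Set.Ioc 0 r) := fun k => (hcont k).integrableOn_Ioc
  have hint1 : ∀ k : ℕ, MeasureTheory.IntegrableOn (fun x : ℝ => x ^ (3 * k) * (1 - x))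
      (Set.Ioc 0 1) := fun k => (hcont k).integrableOn_Ioc
  -- summability of norm integrals
  have hsum : Summable fun k : ℕ => ∫ x in Set.Ioc (0:ℝ) r, ‖x ^ (3 * k) * (1 - x)‖ := by
    have hbase : Summable fun k : ℕ => ((k:ℝ) + 1)⁻¹ ^ 2 := by
      have := (Real.summable_one_div_nat_pow (p := 2)).mpr one_lt_two
      have h2 := (summable_nat_add_iff (f := fun n : ℕ => 1 / (n:ℝ) ^ 2) 1).mpr this
      refine h2.congr fun k => ?_
      push_cast
      rw [one_div, ← inv_pow]
    refine Summable.of_nonneg_of_le (fun k => ?_) (fun k => ?_) hbase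
    · exact MeasureTheory.integral_nonneg fun x => norm_nonneg _
    · have hmono : (∫ x in Set.Ioc (0:ℝ) r, ‖x ^ (3 * k) * (1 - x)‖) ≤
          ∫ x in Set.Ioc (0:ℝ) 1, ‖x ^ (3 * k) * (1 - x)‖ := by
        apply MeasureTheory.setIntegral_mono_set (hint1 k).norm
        · exact Filter.Eventually.of_forall fun x => norm_nonneg _
        · exact HasSubset.Subset.eventuallyLE (Set.Ioc_subset_Ioc_right hr1)
      rw [norm_int one_pos le_rfl k] at hmono
      refine hmono.trans ?_
      rw [one_pow, one_pow, div_sub_div _ _ (by positivity) (by positivity)]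
      have hpos : (0:ℝ) < ((k:ℝ) + 1) ^ 2 := by positivity
      rw [div_le_iff₀ (by positivity), inv_pow, inv_mul_eq_div, le_div_iff₀ hpos]
      nlinarith [sq_nonneg (k:ℝ)]
  have key := MeasureTheory.integral_tsum_of_summable_integral_norm
    (μ := MeasureTheory.volume.restrict (Set.Ioc (0:ℝ) r))
    (F := fun (k : ℕ) (x : ℝ) => x ^ (3 * k) * (1 - x)) (fun k => hint k) hsum
  have hL : ∀ k : ℕ, (∫ x in Set.Ioc (0:ℝ) r, x ^ (3 * k) * (1 - x)) =
      r ^ (3 * k + 1) / (3 * (k:ℝ) + 1) - r ^ (3 * k + 2) / (3 * (k:ℝ) + 2) := by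
    intro k
    rw [← intervalIntegral.integral_of_le hr0.le, per_term k]
  rw [funext hL] at key
  rw [key, intervalIntegral.integral_of_le hr0.le]
  apply MeasureTheory.integral_congr_ae
  have hne : ∀ᵐ x : ℝ ∂(MeasureTheory.volume.restrict (Set.Ioc (0:ℝ) r)), x ≠ 1 := by
    apply MeasureTheory.ae_restrict_of_ae
    rw [MeasureTheory.ae_iff]
    have h0 : {x : ℝ | ¬ x ≠ 1} = {1} := by ext x; simp
    rw [h0]
    exact MeasureTheory.measure_singleton 1
  filter_upwards [hne, MeasureTheory.ae_restrict_mem measurableSet_Ioc] with x hx1 hx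
  have hx0 : 0 < x := hx.1
  have hxlt : x < 1 := lt_of_le_of_ne (hx.2.trans hr1) hx1
  have h3 : x ^ 3 < 1 := pow_lt_one₀ hx0.le hxlt (by norm_num)
  have hgeo : ∑' k : ℕ, (x ^ 3) ^ k = (1 - x ^ 3)⁻¹ :=
    tsum_geometric_of_lt_one (by positivity) h3
  calc ∑' k : ℕ, x ^ (3 * k) * (1 - x)
      = (∑' k : ℕ, (x ^ 3) ^ k) * (1 - x) := by
        rw [← tsum_mul_right]; congr 1; funext k; rw [pow_mul]
    _ = (1 + x + x ^ 2)⁻¹ := by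
        rw [hgeo]
        have h13 : 1 - x ^ 3 = (1 - x) * (1 + x + x ^ 2) := by ring
        rw [h13, mul_inv, mul_comm ((1-x)⁻¹), mul_assoc,
          inv_mul_cancel₀ (by linarith), mul_one]

theorem stmt_6 (n : ℕ) (hn : 0 < n) :
    (n : ℝ) ^ 2 * Real.sqrt 3 * Real.arctan (Real.sqrt 3 / (2 * (n : ℝ) + 1)) =
      (3 / 2) * ∑' k : ℕ, (1 / ((n : ℝ) ^ 3) ^ k) *
        ((n : ℝ) / (3 * (k : ℝ) + 1) - 1 / (3 * (k : ℝ) + 2)) := by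
  set c : ℝ := (n : ℝ) with hc
  have hc1 : (1:ℝ) ≤ c := by rw [hc]; exact_mod_cast hn
  have hc0 : (0:ℝ) < c := lt_of_lt_of_le one_pos hc1
  have hr0 : (0:ℝ) < c⁻¹ := by positivity
  have hr1 : c⁻¹ ≤ 1 := inv_le_one_of_one_le₀ hc1
  have hS := (interchange hr0 hr1).trans (ftc_lemma hr0.le)
  have harg : Real.sqrt 3 * c⁻¹ / (2 + c⁻¹) = Real.sqrt 3 / (2 * c + 1) := by
    rw [div_eq_div_iff (by positivity) (by positivity)]
    field_simp
  rw [harg] at hS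
  have hT : ∑' k : ℕ, (1 / (c ^ 3) ^ k) * (c / (3 * (k:ℝ) + 1) - 1 / (3 * (k:ℝ) + 2)) =
      c ^ 2 * ∑' k : ℕ, ((c⁻¹) ^ (3 * k + 1) / (3 * (k:ℝ) + 1) -
        (c⁻¹) ^ (3 * k + 2) / (3 * (k:ℝ) + 2)) := by
    rw [← tsum_mul_left]
    congr 1
    funext k
    have hA : (0:ℝ) < 3 * (k:ℝ) + 1 := by positivity
    have hB : (0:ℝ) < 3 * (k:ℝ) + 2 := by positivity
    have e1 : (1:ℝ) / (c ^ 3) ^ k = (c⁻¹) ^ (3 * k) := by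
      rw [one_div, ← pow_mul, ← inv_pow]
    rw [e1, pow_add, pow_add, inv_pow]
    field_simp
  rw [hT, hS]
  have h33 : Real.sqrt 3 * Real.sqrt 3 = 3 := Real.mul_self_sqrt (by norm_num)
  have h3 : Real.sqrt 3 ≠ 0 := by positivity
  have hs2 : Real.sqrt 3 ^ 2 = 3 := Real.sq_sqrt (by norm_num)
  field_simp
  ring_nf
  linear_combination (1 : ℝ) * hs2
end

section
/- For every positive integer n, n⁷ · arctan( 1/(2n − 1) ) = (1/16) · ∑_{k=0}^∞ (1/(16n⁸)^k) · ( 8n⁶/(8k+1) + 8n⁵/(8k+2) + 4n⁴/(8k+3) − 2n²/(8k+5) − 2n/(8k+6) − 1/(8k+7) ). -/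
open Complex

set_option maxHeartbeats 1000000 in
theorem stmt_7 (n : ℕ) (hn : 0 < n) :
    (n : ℝ) ^ 7 * Real.arctan (1 / (2 * (n : ℝ) - 1)) =
      (1 / 16) * ∑' k : ℕ, (1 / (16 * (n : ℝ) ^ 8) ^ k) *
        (8 * (n : ℝ) ^ 6 / (8 * (k : ℝ) + 1) + 8 * (n : ℝ) ^ 5 / (8 * (k : ℝ) + 2)
          + 4 * (n : ℝ) ^ 4 / (8 * (k : ℝ) + 3) - 2 * (n : ℝ) ^ 2 / (8 * (k : ℝ) + 5)
          - 2 * (n : ℝ) / (8 * (k : ℝ) + 6) - 1 / (8 * (k : ℝ) + 7)) := by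
  have hn1 : (1:ℝ) ≤ (n:ℝ) := by exact_mod_cast hn
  have hn0 : (0:ℝ) < (n:ℝ) := by linarith
  set r : ℝ := 1/(2*(n:ℝ)) with hr
  have hr0 : 0 < r := by positivity
  have hrle : r ≤ 1/2 := by
    rw [hr, div_le_div_iff₀ (by linarith) (by norm_num)]; linarith
  set z : ℂ := (r : ℂ) * (1 + I) with hzdef
  have hI8 : (1 + I)^8 = (16:ℂ) := by
    have h4 : I^4 = 1 := by rw [show (4:ℕ)=2*2 by rfl, pow_mul, I_sq]; ring
    have h : (1+I)^2 = 2*I := by ring_nf; rw [I_sq]; ring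
    calc (1+I)^8 = ((1+I)^2)^4 := by ring
    _ = (16:ℂ) := by rw [h]; ring_nf; rw [h4]; ring
  have hnorm : ‖z‖ < 1 := by
    have h1 : ‖(1+I : ℂ)‖ = Real.sqrt 2 := by
      rw [Complex.norm_def, Complex.normSq_apply]
      norm_num
    have h2 : Real.sqrt 2 < 2 := by
      nlinarith [Real.sq_sqrt (by norm_num : (0:ℝ) ≤ 2), Real.sqrt_nonneg 2]
    have h3 : (0:ℝ) ≤ Real.sqrt 2 := Real.sqrt_nonneg 2
    calc ‖z‖ = ‖((r:ℝ):ℂ)‖ * ‖(1+I:ℂ)‖ := norm_mul _ _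
    _ = r * Real.sqrt 2 := by rw [h1, Complex.norm_real, Real.norm_eq_abs, abs_of_pos hr0]
    _ < 1 := by nlinarith
  have hre : (1-z).re = 1 - r := by simp [hzdef]
  have him' : (1-z).im = -r := by simp [hzdef]
  have hrepos : 0 < (1-z).re := by rw [hre]; linarith
  have hc : r/(1-r) = 1/(2*(n:ℝ)-1) := by
    rw [hr]
    rw [div_eq_div_iff (by linarith) (by linarith)]
    field_simp
  have hargval : (Complex.log (1-z)).im = - Real.arctan (1/(2*(n:ℝ)-1)) := by
    rw [Complex.log_im]
    have hbound : |Complex.arg (1-z)| < Real.pi/2 :=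
      Complex.abs_arg_lt_pi_div_two_iff.mpr (Or.inl hrepos)
    rw [abs_lt] at hbound
    have ht := Real.arctan_tan hbound.1 hbound.2
    rw [Complex.tan_arg, hre, him'] at ht
    rw [← ht, ← hc, neg_div, Real.arctan_neg]
  have hlog := Complex.hasSum_taylorSeries_neg_log hnorm
  have him := hlog.mapL Complex.imCLM
  have hsum1 : HasSum (fun k : ℕ => (z^k).im / (k:ℝ))
      (Real.arctan (1/(2*(n:ℝ)-1))) := by
    convert him using 1
    · funext k
      simp only [Complex.imCLM_apply]
      rw [show ((k:ℂ)) = ((k:ℝ):ℂ) by push_cast; ring, Complex.div_ofReal_im]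
    · simp [hargval]
  have hsum2 : HasSum (fun p : ℕ × Fin 8 =>
      (z^(p.1*8+(p.2:ℕ))).im / ((p.1*8+(p.2:ℕ) : ℕ):ℝ))
      (Real.arctan (1/(2*(n:ℝ)-1))) :=
    ((Nat.divModEquiv 8).symm.hasSum_iff).mpr hsum1
  have hsum3 : HasSum
      (fun k : ℕ => ∑ j : Fin 8, (z^(k*8+(j:ℕ))).im / ((k*8+(j:ℕ) : ℕ):ℝ))
      (Real.arctan (1/(2*(n:ℝ)-1))) :=
    hsum2.prod_fiberwise (fun k => hasSum_fintype _)
  have hsum4 := hsum3.mul_left (16*(n:ℝ)^7)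
  have hz8 : z^8 = (((1/(16*(n:ℝ)^8)) : ℝ) : ℂ) := by
    have hval : r^8*16 = 1/(16*(n:ℝ)^8) := by rw [hr]; field_simp; ring
    rw [hzdef, mul_pow, hI8, ← hval]
    push_cast
    ring
  have him_j : ∀ (k j : ℕ), (z^(k*8+j)).im
      = (1/(16*(n:ℝ)^8))^k * (r^j * ((1+I)^j).im) := by
    intro k j
    have hsplit : z^(k*8+j) = ((((1/(16*(n:ℝ)^8))^k * r^j : ℝ)):ℂ) * (1+I)^j := by
      rw [show k*8+j = 8*k+j from by ring, pow_add, pow_mul, hz8, hzdef, mul_pow]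
      push_cast
      ring
    rw [hsplit, Complex.mul_im]
    simp only [Complex.ofReal_re, Complex.ofReal_im, zero_mul, add_zero, sub_zero]
    ring
  have him_0 : ∀ k : ℕ, (z^(k*8)).im = 0 := by
    intro k
    rw [show k*8 = 8*k from by ring, pow_mul, hz8, ← Complex.ofReal_pow]
    exact Complex.ofReal_im _
  have key : (fun k : ℕ => 16*(n:ℝ)^7 *
        ∑ j : Fin 8, (z^(k*8+(j:ℕ))).im / ((k*8+(j:ℕ) : ℕ):ℝ))
      = (fun k : ℕ => (1 / (16 * (n : ℝ) ^ 8) ^ k) *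
        (8 * (n : ℝ) ^ 6 / (8 * (k : ℝ) + 1) + 8 * (n : ℝ) ^ 5 / (8 * (k : ℝ) + 2)
          + 4 * (n : ℝ) ^ 4 / (8 * (k : ℝ) + 3) - 2 * (n : ℝ) ^ 2 / (8 * (k : ℝ) + 5)
          - 2 * (n : ℝ) / (8 * (k : ℝ) + 6) - 1 / (8 * (k : ℝ) + 7))) := by
    funext k
    have e0 : ((1+I)^(0:ℕ)).im = 0 := by norm_num
    have e1 : ((1+I)^(1:ℕ)).im = 1 := by norm_num
    have e2 : ((1+I)^(2:ℕ)).im = 2 := by norm_num [pow_succ, Complex.ext_iff]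
    have e3 : ((1+I)^(3:ℕ)).im = 2 := by norm_num [pow_succ, Complex.ext_iff]
    have e4 : ((1+I)^(4:ℕ)).im = 0 := by norm_num [pow_succ, Complex.ext_iff]
    have e5 : ((1+I)^(5:ℕ)).im = -4 := by norm_num [pow_succ, Complex.ext_iff]
    have e6 : ((1+I)^(6:ℕ)).im = -8 := by norm_num [pow_succ, Complex.ext_iff]
    have e7 : ((1+I)^(7:ℕ)).im = -8 := by norm_num [pow_succ, Complex.ext_iff]
    rw [Fin.sum_univ_eight]
    simp only [him_j, Fin.isValue, Fin.val_zero, Fin.val_one,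
      show ((2:Fin 8):ℕ) = 2 from rfl, show ((3:Fin 8):ℕ) = 3 from rfl,
      show ((4:Fin 8):ℕ) = 4 from rfl, show ((5:Fin 8):ℕ) = 5 from rfl,
      show ((6:Fin 8):ℕ) = 6 from rfl, show ((7:Fin 8):ℕ) = 7 from rfl,
      e0, e1, e2, e3, e4, e5, e6, e7, him_0, mul_zero, zero_div, add_zero, zero_add,
      hr]
    push_cast
    rw [show (1:ℝ)/(16*(n:ℝ)^8)^k = (1/(16*(n:ℝ)^8))^k by rw [one_div, one_div, inv_pow]]
    generalize (1/(16*(n:ℝ)^8))^k = X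
    have hk0 : (0:ℝ) ≤ (k:ℝ) := Nat.cast_nonneg k
    have d1 : (k:ℝ)*8+1 ≠ 0 := by positivity
    have d2 : (k:ℝ)*8+2 ≠ 0 := by positivity
    have d3 : (k:ℝ)*8+3 ≠ 0 := by positivity
    have d5 : (k:ℝ)*8+5 ≠ 0 := by positivity
    have d6 : (k:ℝ)*8+6 ≠ 0 := by positivity
    have d7 : (k:ℝ)*8+7 ≠ 0 := by positivity
    have d1' : 8*(k:ℝ)+1 ≠ 0 := by positivity
    have d2' : 8*(k:ℝ)+2 ≠ 0 := by positivity
    have d3' : 8*(k:ℝ)+3 ≠ 0 := by positivity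
    have d5' : 8*(k:ℝ)+5 ≠ 0 := by positivity
    have d6' : 8*(k:ℝ)+6 ≠ 0 := by positivity
    have d7' : 8*(k:ℝ)+7 ≠ 0 := by positivity
    have hnne : (n:ℝ) ≠ 0 := ne_of_gt hn0
    field_simp
    ring
  rw [key] at hsum4
  rw [hsum4.tsum_eq]
  ring
end

section
/- For every positive integer n, n⁷ · arctan( 1/(2n + 1) ) = (1/16) · ∑_{k=0}^∞ (1/(16n⁸)^k) · ( 8n⁶/(8k+1) − 8n⁵/(8k+2) + 4n⁴/(8k+3) − 2n²/(8k+5) + 2n/(8k+6) − 1/(8k+7) ). -/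
open Complex


theorem stmt_8 (n : ℕ) (hn : 0 < n) :
    (n : ℝ) ^ 7 * Real.arctan (1 / (2 * (n : ℝ) + 1)) =
      (1 / 16) * ∑' k : ℕ, (1 / (16 * (n : ℝ) ^ 8) ^ k) *
        (8 * (n : ℝ) ^ 6 / (8 * (k : ℝ) + 1) - 8 * (n : ℝ) ^ 5 / (8 * (k : ℝ) + 2)
          + 4 * (n : ℝ) ^ 4 / (8 * (k : ℝ) + 3) - 2 * (n : ℝ) ^ 2 / (8 * (k : ℝ) + 5)
          + 2 * (n : ℝ) / (8 * (k : ℝ) + 6) - 1 / (8 * (k : ℝ) + 7)) := by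
  set N : ℝ := (n : ℝ) with hNdef
  have hN1 : 1 ≤ N := by rw [hNdef]; exact_mod_cast Nat.one_le_iff_ne_zero.mpr hn.ne'
  have hN0 : (0:ℝ) < N := lt_of_lt_of_le one_pos hN1
  have hNc : (N : ℂ) ≠ 0 := by exact_mod_cast hN0.ne'
  set z : ℂ := -(1 + I) / (((2 * N : ℝ)) : ℂ) with hz
  have h2N : (((2 * N : ℝ)) : ℂ) = 2 * (N : ℂ) := by push_cast; ring
  have hI2 : (1 + I)^2 = 2 * I := by rw [add_sq, I_sq]; ring
  have hz2 : z ^ 2 = I / (2 * (N:ℂ)^2) := by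
    rw [hz, h2N, div_pow, neg_pow, hI2]; field_simp
  have hz4 : z ^ 4 = -(1 / (4 * (N:ℂ)^4)) := by
    rw [show z^4 = (z^2)^2 by ring, hz2, div_pow, I_sq]; field_simp; ring
  have hz8 : z ^ 8 = (((16 * N^8)⁻¹ : ℝ) : ℂ) := by
    rw [show z^8 = (z^4)^2 by ring, hz4]; push_cast; field_simp; ring
  have hz3 : z ^ 3 = (1 - I) / (4 * (N:ℂ)^3) := by
    rw [show z^3 = z^2 * z by ring, hz2, hz, h2N]
    field_simp; linear_combination (-4) * I_sq
  have hz5 : z ^ 5 = (1 + I) / (8 * (N:ℂ)^5) := by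
    rw [show z^5 = z^4 * z by ring, hz4, hz, h2N]; field_simp
    ring
  have hz6 : z ^ 6 = -I / (8 * (N:ℂ)^6) := by
    rw [show z^6 = z^4 * z^2 by ring, hz4, hz2]; field_simp; ring
  have hz7 : z ^ 7 = (-1 + I) / (16 * (N:ℂ)^7) := by
    rw [show z^7 = z^4 * z^3 by ring, hz4, hz3]; field_simp; ring
  -- norm bound
  have hnormsq : Complex.normSq z = 1 / (2 * N^2) := by
    rw [hz, map_div₀]
    simp [Complex.normSq_apply]
    field_simp
    ring
  have hnorm : ‖z‖ < 1 := by
    have h1 : ‖z‖^2 = 1 / (2*N^2) := by rw [Complex.sq_norm, hnormsq]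
    have hle : ‖z‖^2 ≤ 1/2 := by
      rw [h1, div_le_div_iff₀ (by positivity) (by norm_num)]; nlinarith
    nlinarith [norm_nonneg z]
  -- arg of 1 - z
  have hre : (1 - z).re = 1 + 1/(2*N) := by
    rw [hz, Complex.sub_re, Complex.one_re, Complex.div_ofReal_re]
    norm_num; field_simp; ring
  have him : (1 - z).im = 1/(2*N) := by
    rw [hz, Complex.sub_im, Complex.one_im, Complex.div_ofReal_im]
    norm_num; field_simp
  have hrepos : 0 < (1 - z).re := by rw [hre]; positivity
  have harg : (1 - z).arg = Real.arctan (1 / (2*N + 1)) := by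
    refine (Real.arctan_eq_of_tan_eq ?_ ?_).symm
    · rw [Complex.tan_arg, hre, him]; field_simp
    · have := Complex.abs_arg_lt_pi_div_two_iff.mpr (Or.inl hrepos)
      rw [abs_lt] at this; exact ⟨this.1, this.2⟩
  -- the has-sum
  have h1 : HasSum (fun k : ℕ => z ^ k / k) (-Complex.log (1 - z)) :=
    Complex.hasSum_taylorSeries_neg_log hnorm
  have h3 : HasSum (fun k : ℕ => -(16*N^7) * ((z ^ k / k).im))
      (16 * N^7 * Real.arctan (1 / (2*N + 1))) := by
    have := (Complex.hasSum_im h1).mul_left (-(16*N^7))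
    convert this using 1
    · rfl
    rw [Complex.neg_im, Complex.log_im, harg]; ring
  have key : ∀ (m j : ℕ), -(16*N^7) * (z ^ (m*8+j) / ((m*8+j : ℕ) : ℂ)).im
      = ((16*N^8)⁻¹)^m * (-(16*N^7) * ((z^j).im) / (8*(m:ℝ)+(j:ℝ))) := by
    intro m j
    have e1 : z ^ (m*8+j) = (((((16*N^8)⁻¹)^m : ℝ)) : ℂ) * z^j := by
      rw [show m*8+j = 8*m+j by ring, pow_add, pow_mul, hz8, ← Complex.ofReal_pow]
    have e2 : ((m*8+j : ℕ) : ℂ) = (((m*8+j : ℕ) : ℝ) : ℂ) := by push_cast; ring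
    rw [e1, e2, Complex.div_ofReal_im, Complex.im_ofReal_mul]
    push_cast
    ring
  have him0 : (z^(0:ℕ)).im = 0 := by simp
  have him1 : (z^(1:ℕ)).im = -1/(2*N) := by
    rw [pow_one, hz, Complex.div_ofReal_im]; simp
  have him2 : (z^(2:ℕ)).im = 1/(2*N^2) := by
    rw [hz2, show 2*(N:ℂ)^2 = ((2*N^2 : ℝ) : ℂ) by push_cast; ring,
      Complex.div_ofReal_im]; simp
  have him3 : (z^(3:ℕ)).im = -1/(4*N^3) := by
    rw [hz3, show 4*(N:ℂ)^3 = ((4*N^3 : ℝ) : ℂ) by push_cast; ring,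
      Complex.div_ofReal_im]; simp
  have him4 : (z^(4:ℕ)).im = 0 := by
    rw [hz4, show -(1/(4*(N:ℂ)^4)) = (((-(1/(4*N^4)) : ℝ)) : ℂ) by push_cast; ring,
      Complex.ofReal_im]
  have him5 : (z^(5:ℕ)).im = 1/(8*N^5) := by
    rw [hz5, show 8*(N:ℂ)^5 = ((8*N^5 : ℝ) : ℂ) by push_cast; ring,
      Complex.div_ofReal_im]; simp
  have him6 : (z^(6:ℕ)).im = -1/(8*N^6) := by
    rw [hz6, show 8*(N:ℂ)^6 = ((8*N^6 : ℝ) : ℂ) by push_cast; ring,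
      Complex.div_ofReal_im]; simp
  have him7 : (z^(7:ℕ)).im = 1/(16*N^7) := by
    rw [hz7, show 16*(N:ℂ)^7 = ((16*N^7 : ℝ) : ℂ) by push_cast; ring,
      Complex.div_ofReal_im]; simp
  have h4 := (Nat.divModEquiv 8).symm.hasSum_iff.mpr h3
  dsimp [Function.comp_def] at h4
  have h5 : HasSum (fun k : ℕ => (1 / (16 * N ^ 8) ^ k) *
        (8 * N ^ 6 / (8 * (k : ℝ) + 1) - 8 * N ^ 5 / (8 * (k : ℝ) + 2)
          + 4 * N ^ 4 / (8 * (k : ℝ) + 3) - 2 * N ^ 2 / (8 * (k : ℝ) + 5)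
          + 2 * N / (8 * (k : ℝ) + 6) - 1 / (8 * (k : ℝ) + 7)))
      (16 * N^7 * Real.arctan (1 / (2*N + 1))) := by
    refine h4.prod_fiberwise fun m => ?_
    convert hasSum_fintype _ using 1
    rw [Fin.sum_univ_eight]
    simp only [Nat.divModEquiv_symm_apply]
    simp only [show ((0:Fin 8):ℕ) = 0 from rfl, show ((1:Fin 8):ℕ) = 1 from rfl,
      show ((2:Fin 8):ℕ) = 2 from rfl, show ((3:Fin 8):ℕ) = 3 from rfl,
      show ((4:Fin 8):ℕ) = 4 from rfl, show ((5:Fin 8):ℕ) = 5 from rfl,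
      show ((6:Fin 8):ℕ) = 6 from rfl, show ((7:Fin 8):ℕ) = 7 from rfl]
    rw [key m 0, key m 1, key m 2, key m 3, key m 4, key m 5, key m 6, key m 7]
    simp only [him0, him1, him2, him3, him4, him5, him6, him7]
    push_cast
    have en1 : -(16*N^7) * (-1/(2*N)) = 8*N^6 := by field_simp; ring
    have en2 : -(16*N^7) * (1/(2*N^2)) = -(8*N^5) := by field_simp; ring
    have en3 : -(16*N^7) * (-1/(4*N^3)) = 4*N^4 := by field_simp; ring
    have en5 : -(16*N^7) * (1/(8*N^5)) = -(2*N^2) := by field_simp; ring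
    have en6 : -(16*N^7) * (-1/(8*N^6)) = 2*N := by field_simp; ring
    have en7 : -(16*N^7) * (1/(16*N^7)) = -1 := by field_simp
    rw [en1, en2, en3, en5, en6, en7, inv_pow]
    ring
  rw [h5.tsum_eq]; ring
end

section
/- For every integer n ≥ 2, n³ · √(2n) · arctan( √(2n)/(n − 1) ) = 2 · ∑_{k=0}^∞ (1/(n⁴)^k) · ( n³/(8k+1) + n²/(8k+3) − n/(8k+5) − 1/(8k+7) ). -/
open MeasureTheory intervalIntegral Set

private lemma stmt_9_aux (N : ℝ) (hN : 2 ≤ N) :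
    N ^ 3 * Real.sqrt (2 * N) * Real.arctan (Real.sqrt (2 * N) / (N - 1)) =
      2 * ∑' k : ℕ, (1 / (N ^ 4) ^ k) *
        (N ^ 3 / (8 * (k : ℝ) + 1) + N ^ 2 / (8 * (k : ℝ) + 3)
          - N / (8 * (k : ℝ) + 5) - 1 / (8 * (k : ℝ) + 7)) := by
  have hN0 : (0:ℝ) < N := by linarith
  set u := Real.sqrt (2 * N) with hu
  have hu2 : u ^ 2 = 2 * N := Real.sq_sqrt (by linarith)
  have hu0 : 0 < u := Real.sqrt_pos.2 (by linarith)
  have h16 : (16:ℝ) ≤ N ^ 4 := by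
    have := pow_le_pow_left₀ (by norm_num : (0:ℝ) ≤ 2) hN 4
    norm_num at this; linarith
  set g : ℕ → ℝ → ℝ := fun k s =>
    (1 / N ^ 4) ^ k * (s ^ (8 * k) * (N ^ 3 + N ^ 2 * s ^ 2 - N * s ^ 4 - s ^ 6)) with hg
  -- integrability
  have hgc : ∀ k, Continuous (g k) := by
    intro k; rw [hg]; fun_prop
  have hint : ∀ k, Integrable (g k) (volume.restrict (Set.Ioc (0:ℝ) 1)) := by
    intro k
    exact ((hgc k).integrableOn_Ioc)
  -- value of each integral
  have hval : ∀ k : ℕ, ∫ s in Set.Ioc (0:ℝ) 1, g k s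
      = (1 / (N ^ 4) ^ k) *
        (N ^ 3 / (8 * (k : ℝ) + 1) + N ^ 2 / (8 * (k : ℝ) + 3)
          - N / (8 * (k : ℝ) + 5) - 1 / (8 * (k : ℝ) + 7)) := by
    intro k
    rw [← intervalIntegral.integral_of_le (zero_le_one)]
    have hpint : ∀ m : ℕ, IntervalIntegrable (fun s : ℝ => s ^ m) volume 0 1 :=
      fun m => (continuous_pow m).intervalIntegrable 0 1
    have key : ∀ m : ℕ, ∫ s in (0:ℝ)..1, s ^ m = 1 / ((m : ℝ) + 1) := by
      intro m; rw [integral_pow]; norm_num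
    have expand : ∀ s : ℝ, s ^ (8 * k) * (N ^ 3 + N ^ 2 * s ^ 2 - N * s ^ 4 - s ^ 6)
        = N ^ 3 * s ^ (8 * k) + N ^ 2 * s ^ (8 * k + 2) - N * s ^ (8 * k + 4) - s ^ (8 * k + 6) := by
      intro s; ring
    rw [hg]
    simp only
    rw [intervalIntegral.integral_const_mul]
    simp only [expand]
    rw [intervalIntegral.integral_sub (((hpint _).const_mul _).add ((hpint _).const_mul _)
          |>.sub ((hpint _).const_mul _)) (hpint _),
        intervalIntegral.integral_sub (((hpint _).const_mul _).add ((hpint _).const_mul _))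
          ((hpint _).const_mul _),
        intervalIntegral.integral_add ((hpint _).const_mul _) ((hpint _).const_mul _),
        intervalIntegral.integral_const_mul, intervalIntegral.integral_const_mul,
        intervalIntegral.integral_const_mul, key, key, key, key]
    push_cast
    rw [one_div (N ^ 4), ← inv_pow, inv_pow, ← one_div (N ^ 4)]
    ring_nf
  -- summability of the integrals of norms
  have hbound : ∀ k : ℕ, ∫ s in Set.Ioc (0:ℝ) 1, ‖g k s‖
      ≤ (1 / N ^ 4) ^ k * (N ^ 3 + N ^ 2) := by
    intro k
    have hconst : Integrable (fun _ : ℝ => (1 / N ^ 4) ^ k * (N ^ 3 + N ^ 2))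
        (volume.restrict (Set.Ioc (0:ℝ) 1)) := integrable_const _
    have hle : ∀ s ∈ Set.Ioc (0:ℝ) 1, ‖g k s‖ ≤ (1 / N ^ 4) ^ k * (N ^ 3 + N ^ 2) := by
      intro s hs
      have hs1 : 0 < s := hs.1
      have hs2 : s ≤ 1 := hs.2
      have hss : s ^ 2 ≤ 1 := by nlinarith
      have hq4 : s ^ 4 ≤ 1 := by nlinarith
      have hA : N * s ^ 4 ≤ N := by nlinarith
      have hB : s ^ 6 ≤ s ^ 2 := by nlinarith [sq_nonneg s]
      have hC : s ^ 2 ≤ N ^ 2 * s ^ 2 := by nlinarith [sq_nonneg s]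
      have hb1 : 0 ≤ N ^ 3 + N ^ 2 * s ^ 2 - N * s ^ 4 - s ^ 6 := by
        nlinarith [hA, hB, hC, mul_pos hN0 hN0]
      have hb2 : N ^ 3 + N ^ 2 * s ^ 2 - N * s ^ 4 - s ^ 6 ≤ N ^ 3 + N ^ 2 := by
        nlinarith [mul_nonneg (by positivity : (0:ℝ) ≤ N ^ 2) (by linarith : (0:ℝ) ≤ 1 - s ^ 2),
          mul_nonneg hN0.le (by positivity : (0:ℝ) ≤ s ^ 4), pow_nonneg hs1.le 6]
      have hp1 : s ^ (8 * k) ≤ 1 := pow_le_one₀ hs1.le hs2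
      have hp0 : 0 ≤ s ^ (8 * k) := by positivity
      have hgnn : 0 ≤ g k s := by
        rw [hg]; simp only; positivity
      rw [Real.norm_of_nonneg hgnn, hg]
      simp only
      calc (1 / N ^ 4) ^ k * (s ^ (8 * k) * (N ^ 3 + N ^ 2 * s ^ 2 - N * s ^ 4 - s ^ 6))
          ≤ (1 / N ^ 4) ^ k * (1 * (N ^ 3 + N ^ 2)) := by
            apply mul_le_mul_of_nonneg_left _ (by positivity)
            exact mul_le_mul hp1 hb2 hb1 (by norm_num)
        _ = (1 / N ^ 4) ^ k * (N ^ 3 + N ^ 2) := by ring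
    calc ∫ s in Set.Ioc (0:ℝ) 1, ‖g k s‖
        ≤ ∫ _ in Set.Ioc (0:ℝ) 1, (1 / N ^ 4) ^ k * (N ^ 3 + N ^ 2) := by
          apply integral_mono_of_nonneg
          · exact Filter.Eventually.of_forall fun s => norm_nonneg _
          · exact hconst
          · filter_upwards [ae_restrict_mem measurableSet_Ioc] with s hs
            exact hle s hs
      _ = (1 / N ^ 4) ^ k * (N ^ 3 + N ^ 2) := by
          simp [Real.volume_Ioc]
  have hsummable : Summable (fun k : ℕ => ∫ s in Set.Ioc (0:ℝ) 1, ‖g k s‖) := by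
    apply Summable.of_nonneg_of_le
      (fun k => integral_nonneg fun s => norm_nonneg _) hbound
    apply Summable.mul_right
    apply summable_geometric_of_lt_one (by positivity)
    rw [div_lt_one (by positivity)]
    linarith
  -- swap sum and integral
  have hswap := MeasureTheory.integral_tsum_of_summable_integral_norm hint hsummable
  -- pointwise sum of the series
  have hpt : ∀ s ∈ Set.Ioc (0:ℝ) 1, (∑' k : ℕ, g k s)
      = N ^ 4 * (N + s ^ 2) / (N ^ 2 + s ^ 4) := by
    intro s hs
    have hs1 : 0 < s := hs.1
    have hs2 : s ≤ 1 := hs.2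
    have hr0 : 0 ≤ s ^ 8 * (1 / N ^ 4) := by positivity
    have hs8 : s ^ 8 ≤ 1 := pow_le_one₀ hs1.le hs2
    have hr1 : s ^ 8 * (1 / N ^ 4) < 1 := by
      have hd : 1 / N ^ 4 ≤ 1 / 16 := by
        apply one_div_le_one_div_of_le
        · norm_num
        · linarith
      have h4 : s ^ 8 * (1 / N ^ 4) ≤ 1 * (1 / 16 : ℝ) :=
        mul_le_mul hs8 hd (by positivity) (by norm_num)
      linarith
    have rw1 : ∀ k : ℕ, g k s
        = (s ^ 8 * (1 / N ^ 4)) ^ k * (N ^ 3 + N ^ 2 * s ^ 2 - N * s ^ 4 - s ^ 6) := by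
      intro k; rw [hg]; simp only; rw [mul_pow, pow_mul]; ring
    simp only [rw1]
    rw [tsum_mul_right, tsum_geometric_of_lt_one hr0 hr1]
    have h3 : (0:ℝ) < N ^ 2 + s ^ 4 := by positivity
    have h4 : 1 - s ^ 8 * (1 / N ^ 4) ≠ 0 := by nlinarith
    have h5 : N ^ 4 - s ^ 8 ≠ 0 := by nlinarith
    field_simp
    ring
  -- evaluate the integral via FTC
  have hFTC : ∫ s in (0:ℝ)..1, N ^ 4 * (N + s ^ 2) / (N ^ 2 + s ^ 4)
      = N ^ 4 / u * Real.arctan (u / (N - 1)) := by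
    have hcont : Continuous fun s : ℝ => N ^ 4 * (N + s ^ 2) / (N ^ 2 + s ^ 4) := by
      apply Continuous.div
      · exact continuous_const.mul (continuous_const.add (continuous_pow 2))
      · exact continuous_const.add (continuous_pow 4)
      · intro s; nlinarith [sq_nonneg s, sq_nonneg (s ^ 2)]
    have key : ∫ s in (0:ℝ)..1, N ^ 4 * (N + s ^ 2) / (N ^ 2 + s ^ 4)
        = (fun s : ℝ => N ^ 4 / u * Real.arctan (u * s / (N - s ^ 2))) 1
          - (fun s : ℝ => N ^ 4 / u * Real.arctan (u * s / (N - s ^ 2))) 0 := by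
      refine intervalIntegral.integral_eq_sub_of_hasDerivAt
        (f := fun s : ℝ => N ^ 4 / u * Real.arctan (u * s / (N - s ^ 2))) ?_ ?_
      · intro s hs
        rw [Set.uIcc_of_le (by norm_num : (0:ℝ) ≤ 1)] at hs
        have hs2 : s ^ 2 ≤ 1 := by nlinarith [hs.1, hs.2]
        have hden : N - s ^ 2 ≠ 0 := by nlinarith
        have h1 : HasDerivAt (fun s : ℝ => u * s / (N - s ^ 2))
            ((u * 1 * (N - s ^ 2) - u * s * (0 - 2 * s ^ 1)) / (N - s ^ 2) ^ 2) s := by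
          have := HasDerivAt.div ((hasDerivAt_id s).const_mul u)
            ((hasDerivAt_pow 2 s).const_sub N) hden
          exact this.congr_deriv (by norm_num)
        have h2 := (Real.hasDerivAt_arctan (u * s / (N - s ^ 2))).comp s h1
        have h3 := h2.const_mul (N ^ 4 / u)
        convert h3 using 1
        · rfl
        · rfl
        have hq : (N - s ^ 2) ^ 2 + (u * s) ^ 2 = N ^ 2 + s ^ 4 := by nlinarith [hu2]
        have hpos : (0:ℝ) < N ^ 2 + s ^ 4 := by nlinarith
        have hw : 1 + (u * s / (N - s ^ 2)) ^ 2 ≠ 0 := by positivity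
        field_simp
        ring_nf
        linear_combination (N * s ^ 2 + s ^ 4) * hu2
      · exact hcont.intervalIntegrable 0 1
    rw [key]
    simp
  -- put everything together
  have htsum : (∑' k : ℕ, (1 / (N ^ 4) ^ k) *
      (N ^ 3 / (8 * (k : ℝ) + 1) + N ^ 2 / (8 * (k : ℝ) + 3)
        - N / (8 * (k : ℝ) + 5) - 1 / (8 * (k : ℝ) + 7)))
      = N ^ 4 / u * Real.arctan (u / (N - 1)) := by
    calc (∑' k : ℕ, (1 / (N ^ 4) ^ k) *
        (N ^ 3 / (8 * (k : ℝ) + 1) + N ^ 2 / (8 * (k : ℝ) + 3)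
          - N / (8 * (k : ℝ) + 5) - 1 / (8 * (k : ℝ) + 7)))
        = ∑' k : ℕ, ∫ s in Set.Ioc (0:ℝ) 1, g k s := by
          exact tsum_congr fun k => (hval k).symm
      _ = ∫ s in Set.Ioc (0:ℝ) 1, (∑' k : ℕ, g k s) := hswap
      _ = ∫ s in Set.Ioc (0:ℝ) 1, N ^ 4 * (N + s ^ 2) / (N ^ 2 + s ^ 4) :=
          setIntegral_congr_fun measurableSet_Ioc hpt
      _ = ∫ s in (0:ℝ)..1, N ^ 4 * (N + s ^ 2) / (N ^ 2 + s ^ 4) :=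
          (intervalIntegral.integral_of_le zero_le_one).symm
      _ = N ^ 4 / u * Real.arctan (u / (N - 1)) := hFTC
  rw [htsum]
  have hmain : N ^ 3 * u = 2 * (N ^ 4 / u) := by
    field_simp
    linear_combination hu2
  rw [← mul_assoc, hmain]

theorem stmt_9 (n : ℕ) (hn : 2 ≤ n) :
    (n : ℝ) ^ 3 * Real.sqrt (2 * n) * Real.arctan (Real.sqrt (2 * n) / ((n : ℝ) - 1)) =
      2 * ∑' k : ℕ, (1 / ((n : ℝ) ^ 4) ^ k) *
        ((n : ℝ) ^ 3 / (8 * (k : ℝ) + 1) + (n : ℝ) ^ 2 / (8 * (k : ℝ) + 3)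
          - (n : ℝ) / (8 * (k : ℝ) + 5) - 1 / (8 * (k : ℝ) + 7)) := by
  exact stmt_9_aux (n : ℝ) (by exact_mod_cast hn)
end

section
/- For every positive integer n, 27 n⁵ · √3 · arctan( 1/(√3 · (2n − 1)) ) = (3/2) · ∑_{k=0}^∞ (1/(−27n⁶)^k) · ( 9n⁴/(6k+1) + 9n³/(6k+2) + 6n²/(6k+3) + 3n/(6k+4) + 1/(6k+5) ). -/
set_option maxHeartbeats 2000000 in
open Complex in
theorem stmt_10 (n : ℕ) (hn : 0 < n) :
    27 * (n : ℝ) ^ 5 * Real.sqrt 3 * Real.arctan (1 / (Real.sqrt 3 * (2 * (n : ℝ) - 1))) =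
      (3 / 2) * ∑' k : ℕ, (1 / (-(27 * (n : ℝ) ^ 6)) ^ k) *
        (9 * (n : ℝ) ^ 4 / (6 * (k : ℝ) + 1) + 9 * (n : ℝ) ^ 3 / (6 * (k : ℝ) + 2)
          + 6 * (n : ℝ) ^ 2 / (6 * (k : ℝ) + 3) + 3 * (n : ℝ) / (6 * (k : ℝ) + 4)
          + 1 / (6 * (k : ℝ) + 5)) := by
  have hN : (1:ℝ) ≤ (n:ℝ) := by exact_mod_cast hn
  have hN0 : (0:ℝ) < (n:ℝ) := by linarith
  set N : ℝ := (n:ℝ) with hNdef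
  set s : ℝ := Real.sqrt 3 with hsdef
  have hs : s ^ 2 = 3 := Real.sq_sqrt (by norm_num)
  have hs0 : (0:ℝ) < s := Real.sqrt_pos.2 (by norm_num)
  set w : ℂ := 3 + (s:ℂ) * I with hwdef
  have hsC : (s:ℂ) ^ 2 = 3 := by
    rw [← Complex.ofReal_pow, hs]; norm_num
  have hI : (I:ℂ) ^ 2 = -1 := I_sq
  have hw2 : w ^ 2 = 6 + 6 * (s:ℂ) * I := by
    rw [hwdef]; linear_combination I ^ 2 * hsC + 3 * hI
  have hw3 : w ^ 3 = 24 * (s:ℂ) * I := by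
    rw [hwdef]; linear_combination (9 * I ^ 2 + s * I ^ 3) * hsC + (27 + 3 * s * I) * hI
  have hw4 : w ^ 4 = -72 + 72 * (s:ℂ) * I := by
    rw [show (4:ℕ) = 2 + 2 by norm_num, pow_add, hw2]
    linear_combination 36 * I ^ 2 * hsC + 108 * hI
  have hw5 : w ^ 5 = -432 + 144 * (s:ℂ) * I := by
    rw [show (5:ℕ) = 2 + 3 by norm_num, pow_add, hw2, hw3]
    linear_combination 144 * I ^ 2 * hsC + 432 * hI
  have hw6 : w ^ 6 = -1728 := by
    rw [show (6:ℕ) = 3 + 3 by norm_num, pow_add, hw3]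
    linear_combination 576 * I ^ 2 * hsC + 1728 * hI
  set z : ℂ := w / ((6 * N : ℝ) : ℂ) with hzdef
  have h6N : (6 * N : ℝ) ≠ 0 := by positivity
  have hNC : (N : ℂ) ≠ 0 := by exact_mod_cast hN0.ne'
  have hre : z.re = 1 / (2 * N) := by
    rw [hzdef, Complex.div_ofReal_re]; simp [hwdef]; field_simp; ring
  have him : z.im = s / (6 * N) := by
    rw [hzdef, Complex.div_ofReal_im]; simp [hwdef]
  have hzn : ‖z‖ < 1 := by
    have h1 : ‖z‖ ^ 2 = normSq z := Complex.sq_norm z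
    have h2 : normSq z = z.re ^ 2 + z.im ^ 2 := by rw [normSq_apply]; ring
    rw [hre, him] at h2
    have h3 : ‖z‖ ^ 2 < 1 := by
      rw [h1, h2]
      have : s ^ 2 = 3 := hs
      rw [div_pow, div_pow, this]
      rw [div_add_div _ _ (by positivity) (by positivity)]
      rw [div_lt_one (by positivity)]
      have hN2 : 1 ≤ N ^ 2 := by nlinarith
      nlinarith [hN2, hN0]
    nlinarith [norm_nonneg z]
  -- z^6 real
  set q : ℝ := -(1 / (27 * N ^ 6)) with hqdef
  have hz6 : z ^ 6 = ((q : ℝ) : ℂ) := by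
    rw [hzdef, div_pow, hw6, hqdef]
    push_cast
    field_simp
    ring
  -- the arctan value
  have h2N : (0:ℝ) < 2 * N - 1 := by linarith
  have h1z_re : (1 - z).re = (2 * N - 1) / (2 * N) := by
    rw [Complex.sub_re, Complex.one_re, hre]; field_simp
  have h1z_im : (1 - z).im = -(s / (6 * N)) := by
    rw [Complex.sub_im, Complex.one_im, him]; ring
  have hre_pos : 0 < (1 - z).re := by
    rw [h1z_re]; exact div_pos h2N (by linarith)
  have harg : (-(Complex.log (1 - z))).im = Real.arctan (1 / (s * (2 * N - 1))) := by
    rw [Complex.neg_im, Complex.log_im]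
    have hb1 : Complex.arg (1 - z) < Real.pi / 2 :=
      Complex.arg_lt_pi_div_two_iff.2 (Or.inl hre_pos)
    have hb2 : -(Real.pi / 2) < Complex.arg (1 - z) :=
      Complex.neg_pi_div_two_lt_arg_iff.2 (Or.inl hre_pos)
    have hratio : (-(s / (6 * N))) / ((2 * N - 1) / (2 * N)) = -(1 / (s * (2 * N - 1))) := by
      have h2N' : 2 * N - 1 ≠ 0 := h2N.ne'
      field_simp
      linear_combination (-2 / (N * 2 - 1)) * hs
    rw [← Real.arctan_tan hb2 hb1, Complex.tan_arg, h1z_re, h1z_im, hratio,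
      Real.arctan_neg, neg_neg]
  -- the series
  have H := Complex.hasSum_taylorSeries_neg_log hzn
  have Him : HasSum (fun k : ℕ => (z ^ k / (k : ℂ)).im)
      (Real.arctan (1 / (s * (2 * N - 1)))) := by
    rw [← harg]
    exact ((Complex.hasSum_iff _ _).1 H).2
  set g : ℕ → ℝ := fun m => q ^ m * s *
      (1 / (6 * N) / (6 * m + 1) + 1 / (6 * N ^ 2) / (6 * m + 2) + 1 / (9 * N ^ 3) / (6 * m + 3)
        + 1 / (18 * N ^ 4) / (6 * m + 4) + 1 / (54 * N ^ 5) / (6 * m + 5)) with hgdef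
  have hz6m : ∀ j : ℕ, ∀ m : ℕ,
      z ^ (m * 6 + j) = ((q ^ m : ℝ) : ℂ) * w ^ j / (((6 * N) ^ j : ℝ) : ℂ) := by
    intro j m
    rw [pow_add, pow_mul', hz6, ← Complex.ofReal_pow, hzdef, div_pow, ← Complex.ofReal_pow]
    ring
  have hfib : ∀ m : ℕ, HasSum
      (fun j : Fin 6 => (z ^ (m * 6 + (j : ℕ)) / ((m * 6 + (j : ℕ) : ℕ) : ℂ)).im) (g m) := by
    intro m
    have h := hasSum_fintype
      (fun j : Fin 6 => (z ^ (m * 6 + (j : ℕ)) / ((m * 6 + (j : ℕ) : ℕ) : ℂ)).im)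
    have key : ∀ (x : ℂ) (r t : ℝ) (k : ℕ), ((r : ℂ) * x / ((t : ℝ) : ℂ) / (k : ℂ)).im
        = r * x.im / t / k := by
      intro x r t k
      rw [Complex.div_natCast_im, Complex.div_ofReal_im]
      simp [Complex.mul_im]
    have hw0im : ((1 : ℂ)).im = 0 := rfl
    have hw1im : w.im = s := by rw [hwdef]; simp
    have hw2im : (w ^ 2).im = 6 * s := by rw [hw2]; simp
    have hw3im : (w ^ 3).im = 24 * s := by rw [hw3]; simp
    have hw4im : (w ^ 4).im = 72 * s := by rw [hw4]; simp
    have hw5im : (w ^ 5).im = 144 * s := by rw [hw5]; simp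
    convert h using 1
    rw [Fin.sum_univ_six]
    simp only [Fin.val_zero, Fin.val_one, Fin.val_two, show ((3 : Fin 6) : ℕ) = 3 from rfl,
      show ((4 : Fin 6) : ℕ) = 4 from rfl, show ((5 : Fin 6) : ℕ) = 5 from rfl]
    rw [hz6m 0, hz6m 1, hz6m 2, hz6m 3, hz6m 4, hz6m 5]
    rw [key, key, key, key, key, key]
    simp only [pow_zero, pow_one, hw0im, hw1im, hw2im, hw3im, hw4im, hw5im]
    push_cast
    have d1 : (6 * (m:ℝ) + 1) ≠ 0 := by positivity
    have d2 : (6 * (m:ℝ) + 2) ≠ 0 := by positivity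
    have d3 : (6 * (m:ℝ) + 3) ≠ 0 := by positivity
    have d4 : (6 * (m:ℝ) + 4) ≠ 0 := by positivity
    have d5 : (6 * (m:ℝ) + 5) ≠ 0 := by positivity
    have hN' : N ≠ 0 := hN0.ne'
    simp only [hgdef]
    simp only [mul_zero, zero_div, zero_add]
    field_simp
    ring
  have H2 := ((Nat.divModEquiv 6).symm.hasSum_iff).mpr Him
  dsimp [Function.comp_def, Nat.divModEquiv] at H2
  have Hg : HasSum g (Real.arctan (1 / (s * (2 * N - 1)))) := H2.prod_fiberwise hfib
  have hqm : ∀ m : ℕ, (1 : ℝ) / (-(27 * N ^ 6)) ^ m = q ^ m := by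
    intro m
    rw [eq_comm, eq_div_iff (pow_ne_zero _ (neg_ne_zero.2 (by positivity : (27 * N ^ 6 : ℝ) ≠ 0))),
      ← mul_pow, hqdef, show -(1 / (27 * N ^ 6)) * -(27 * N ^ 6) = 1 by field_simp, one_pow]
  have H3 := Hg.mul_left (27 * N ^ 5 * s)
  have hterm : (fun m : ℕ => 27 * N ^ 5 * s * g m) = fun m : ℕ =>
      3 / 2 * (1 / (-(27 * N ^ 6)) ^ m * (9 * N ^ 4 / (6 * (m:ℝ) + 1) + 9 * N ^ 3 / (6 * (m:ℝ) + 2)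
        + 6 * N ^ 2 / (6 * (m:ℝ) + 3) + 3 * N / (6 * (m:ℝ) + 4) + 1 / (6 * (m:ℝ) + 5))) := by
    funext m
    have d1 : (6 * (m:ℝ) + 1) ≠ 0 := by positivity
    have d2 : (6 * (m:ℝ) + 2) ≠ 0 := by positivity
    have d3 : (6 * (m:ℝ) + 3) ≠ 0 := by positivity
    have d4 : (6 * (m:ℝ) + 4) ≠ 0 := by positivity
    have d5 : (6 * (m:ℝ) + 5) ≠ 0 := by positivity
    have hN' : N ≠ 0 := hN0.ne'
    rw [hqm m]
    simp only [hgdef]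
    set X : ℝ := 1 / (6 * N) / (6 * (m:ℝ) + 1) + 1 / (6 * N ^ 2) / (6 * (m:ℝ) + 2)
      + 1 / (9 * N ^ 3) / (6 * (m:ℝ) + 3) + 1 / (18 * N ^ 4) / (6 * (m:ℝ) + 4)
      + 1 / (54 * N ^ 5) / (6 * (m:ℝ) + 5) with hX
    have step1 : 27 * N ^ 5 * s * (q ^ m * s * X) = 81 * N ^ 5 * (q ^ m * X) := by
      linear_combination (27 * N ^ 5 * q ^ m * X) * hs
    rw [step1, hX]
    field_simp
    ring
  rw [hterm] at H3
  rw [← H3.tsum_eq]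
  exact tsum_mul_left
end

section
/- For every positive integer n, 27 n⁵ · √3 · arctan( 1/(√3 · (2n + 1)) ) = (3/2) · ∑_{k=0}^∞ (1/(−27n⁶)^k) · ( 9n⁴/(6k+1) − 9n³/(6k+2) + 6n²/(6k+3) − 3n/(6k+4) + 1/(6k+5) ). -/
open Real Complex

set_option maxHeartbeats 2000000 in
theorem stmt_11 (n : ℕ) (hn : 0 < n) :
    27 * (n : ℝ) ^ 5 * Real.sqrt 3 * Real.arctan (1 / (Real.sqrt 3 * (2 * (n : ℝ) + 1))) =
      (3 / 2) * ∑' k : ℕ, (1 / (-(27 * (n : ℝ) ^ 6)) ^ k) *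
        (9 * (n : ℝ) ^ 4 / (6 * (k : ℝ) + 1) - 9 * (n : ℝ) ^ 3 / (6 * (k : ℝ) + 2)
          + 6 * (n : ℝ) ^ 2 / (6 * (k : ℝ) + 3) - 3 * (n : ℝ) / (6 * (k : ℝ) + 4)
          + 1 / (6 * (k : ℝ) + 5)) := by
  have hN : (0:ℝ) < (n:ℝ) := by exact_mod_cast hn
  have hN1 : (1:ℝ) ≤ (n:ℝ) := by exact_mod_cast hn
  set N : ℝ := (n:ℝ) with hNdef
  have hNne : N ≠ 0 := ne_of_gt hN
  have hs3 : Real.sqrt 3 ^ 2 = 3 := Real.sq_sqrt (by norm_num)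
  have hs0 : 0 < Real.sqrt 3 := Real.sqrt_pos.2 (by norm_num)
  set s : ℝ := Real.sqrt 3 with hsdef
  have hsne : s ≠ 0 := ne_of_gt hs0
  set z : ℂ := ⟨-(1/(2*N)), -(s/(6*N))⟩ with hzdef
  have hre : z.re = -(1/(2*N)) := rfl
  have him : z.im = -(s/(6*N)) := rfl
  have hnorm : ‖z‖ < 1 := by
    have h2 : ‖z‖^2 < 1 := by
      rw [Complex.sq_norm, Complex.normSq_apply, hre, him]
      have : (6:ℝ)*N ≠ 0 := by positivity
      have h : -(1/(2*N)) * -(1/(2*N)) + -(s/(6*N)) * -(s/(6*N)) = 1/(3*N^2) := by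
        field_simp
        linear_combination 12*hs3
      rw [h]
      rw [div_lt_one (by positivity)]
      nlinarith
    nlinarith [norm_nonneg z]
  have h1 := hasSum_taylorSeries_neg_log hnorm
  have h2 := Complex.hasSum_im h1
  set t : ℝ := 1 / (s * (2 * N + 1)) with htdef
  have hre1 : (1 - z).re = 1 + 1/(2*N) := by simp [Complex.sub_re, hre]
  have him1 : (1 - z).im = s/(6*N) := by simp [Complex.sub_im, him]
  have hrepos : 0 < (1 - z).re := by rw [hre1]; positivity
  have harg : (1 - z).arg = Real.arctan t := by
    have habs : |(1 - z).arg| < π/2 :=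
      Complex.abs_arg_lt_pi_div_two_iff.2 (Or.inl hrepos)
    have h3 : Real.arctan (Real.tan ((1-z).arg)) = (1-z).arg :=
      Real.arctan_tan (neg_lt_of_abs_lt habs) (lt_of_abs_lt habs)
    rw [← h3, Complex.tan_arg, hre1, him1]
    congr 1
    rw [htdef]
    field_simp
    linear_combination 2*hs3
  rw [Complex.neg_im, Complex.log_im, harg] at h2
  -- h2 : HasSum (fun k => (z ^ k / k).im) (-(Real.arctan t))
  have hz2 : z^2 = ⟨1/(6*N^2), s/(6*N^2)⟩ := by
    rw [Complex.ext_iff, pow_two, Complex.mul_re, Complex.mul_im, hre, him]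
    constructor
    · field_simp
      linear_combination (-4)*hs3
    · field_simp
      ring
  have hz3 : z^3 = ⟨0, -(s/(9*N^3))⟩ := by
    rw [show (3:ℕ) = 2 + 1 from rfl, pow_succ, hz2,
      Complex.ext_iff, Complex.mul_re, Complex.mul_im, hre, him]
    constructor
    · field_simp
      linear_combination 2*hs3
    · field_simp
      ring
  have hz4 : z^4 = ⟨-(1/(18*N^4)), s/(18*N^4)⟩ := by
    rw [show (4:ℕ) = 3 + 1 from rfl, pow_succ, hz3,
      Complex.ext_iff, Complex.mul_re, Complex.mul_im, hre, him]
    constructor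
    · field_simp
      linear_combination (-36*N^4)*hs3
    · field_simp
      ring
  have hz5 : z^5 = ⟨1/(18*N^5), -(s/(54*N^5))⟩ := by
    rw [show (5:ℕ) = 4 + 1 from rfl, pow_succ, hz4,
      Complex.ext_iff, Complex.mul_re, Complex.mul_im, hre, him]
    constructor
    · field_simp
      linear_combination (2*N^5)*hs3
    · field_simp
      ring
  have hz6 : z^6 = ((-(1/(27*N^6)) : ℝ) : ℂ) := by
    rw [show (6:ℕ) = 5 + 1 from rfl, pow_succ, hz5,
      Complex.ext_iff, Complex.mul_re, Complex.mul_im, hre, him]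
    simp only [Complex.ofReal_re, Complex.ofReal_im]
    constructor
    · field_simp
      linear_combination (-972*N^6)*hs3
    · field_simp
      ring
  set r : ℝ := -(1/(27*N^6)) with hrdef
  have key : HasSum (fun p : ℕ × Fin 6 =>
      (z ^ (p.1 * 6 + (p.2:ℕ)) / ((p.1 * 6 + (p.2:ℕ) : ℕ) : ℂ)).im) (-(Real.arctan t)) :=
    (Equiv.hasSum_iff (Nat.divModEquiv 6).symm).2 h2
  have key2 : HasSum (fun m : ℕ => ∑ j : Fin 6,
      (z ^ (m * 6 + (j:ℕ)) / ((m * 6 + (j:ℕ) : ℕ) : ℂ)).im) (-(Real.arctan t)) :=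
    key.prod_fiberwise (fun m => hasSum_fintype _)
  have hterm : ∀ (m j : ℕ), (z ^ (m*6+j) / ((m*6+j : ℕ):ℂ)).im
      = r^m * (z^j).im / ((m*6+j : ℕ):ℝ) := by
    intro m j
    have hp : z ^ (m*6+j) = ((r^m : ℝ) : ℂ) * z^j := by
      rw [pow_add, mul_comm m 6, pow_mul, hz6, ← Complex.ofReal_pow]
    rw [hp, show ((m*6+j : ℕ):ℂ) = (((m*6+j : ℕ):ℝ) : ℂ) by push_cast; ring,
      Complex.div_ofReal_im, Complex.im_ofReal_mul]
  have hrm : ∀ m : ℕ, r^m = 1 / (-(27*N^6))^m := by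
    intro m
    rw [hrdef, show -(1/(27*N^6)) = (-(27*N^6))⁻¹ by rw [inv_neg, one_div], inv_pow, one_div]
  have hsum : ∀ m : ℕ, (∑ j : Fin 6,
      (z ^ (m * 6 + (j:ℕ)) / ((m * 6 + (j:ℕ) : ℕ) : ℂ)).im)
      = (-(s/(54*N^5))) * ((1 / (-(27 * N ^ 6)) ^ m) *
        (9 * N ^ 4 / (6 * (m : ℝ) + 1) - 9 * N ^ 3 / (6 * (m : ℝ) + 2)
          + 6 * N ^ 2 / (6 * (m : ℝ) + 3) - 3 * N / (6 * (m : ℝ) + 4)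
          + 1 / (6 * (m : ℝ) + 5))) := by
    intro m
    rw [Fin.sum_univ_six]
    simp only [hterm, hrm, show ((0:Fin 6):ℕ) = 0 from rfl, show ((1:Fin 6):ℕ) = 1 from rfl,
      show ((2:Fin 6):ℕ) = 2 from rfl, show ((3:Fin 6):ℕ) = 3 from rfl,
      show ((4:Fin 6):ℕ) = 4 from rfl, show ((5:Fin 6):ℕ) = 5 from rfl,
      pow_zero, pow_one, hz2, hz3, hz4, hz5, him, Complex.one_im]
    push_cast
    have hX : (-(27*N^6))^m ≠ 0 := pow_ne_zero _ (neg_ne_zero.2 (by positivity))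
    have d1 : ((m:ℝ)*6+1) ≠ 0 := by positivity
    have d2 : ((m:ℝ)*6+2) ≠ 0 := by positivity
    have d3 : ((m:ℝ)*6+3) ≠ 0 := by positivity
    have d4 : ((m:ℝ)*6+4) ≠ 0 := by positivity
    have d5 : ((m:ℝ)*6+5) ≠ 0 := by positivity
    have e1 : (6*(m:ℝ)+1) ≠ 0 := by positivity
    have e2 : (6*(m:ℝ)+2) ≠ 0 := by positivity
    have e3 : (6*(m:ℝ)+3) ≠ 0 := by positivity
    have e4 : (6*(m:ℝ)+4) ≠ 0 := by positivity
    have e5 : (6*(m:ℝ)+5) ≠ 0 := by positivity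
    simp only [mul_zero, zero_div, zero_add]
    field_simp
    ring
  simp only [hsum] at key2
  have hc : (-(s/(54*N^5))) ≠ 0 := neg_ne_zero.2 (by positivity)
  have key5 : HasSum (fun m : ℕ => (1 / (-(27 * N ^ 6)) ^ m) *
        (9 * N ^ 4 / (6 * (m : ℝ) + 1) - 9 * N ^ 3 / (6 * (m : ℝ) + 2)
          + 6 * N ^ 2 / (6 * (m : ℝ) + 3) - 3 * N / (6 * (m : ℝ) + 4)
          + 1 / (6 * (m : ℝ) + 5)))
      ((-(s/(54*N^5)))⁻¹ * -(Real.arctan t)) := by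
    have h := key2.mul_left (-(s/(54*N^5)))⁻¹
    simpa only [inv_mul_cancel_left₀ hc] using h
  rw [key5.tsum_eq]
  field_simp
  linear_combination (54*Real.arctan t) * hs3
end

section
/- For every integer n ≥ 2, n² · √n · arctan( √n/(n − 1) ) = ∑_{k=0}^∞ (1/(−n³)^k) · ( n²/(6k+1) + 2n/(6k+3) + 1/(6k+5) ). -/
theorem stmt_12 (n : ℕ) (hn : 2 ≤ n) :
    (n : ℝ) ^ 2 * Real.sqrt n * Real.arctan (Real.sqrt n / ((n : ℝ) - 1)) =
      ∑' k : ℕ, (1 / (-(n : ℝ) ^ 3) ^ k) *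
        ((n : ℝ) ^ 2 / (6 * (k : ℝ) + 1) + 2 * (n : ℝ) / (6 * (k : ℝ) + 3)
          + 1 / (6 * (k : ℝ) + 5)) := by
  have hn1 : (1 : ℝ) < (n : ℝ) := by exact_mod_cast hn.trans_lt' one_lt_two
  set s := Real.sqrt n with hsdef
  have hs2 : s ^ 2 = (n : ℝ) := Real.sq_sqrt (by linarith)
  have hs0 : 0 < s := Real.sqrt_pos.mpr (by linarith)
  have hs1 : 1 < s := by nlinarith
  rw [← hs2]
  have hsne : s ≠ 0 := hs0.ne'
  -- norms of the series arguments
  have hx : ‖(s⁻¹ : ℝ)‖ < 1 := by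
    rw [Real.norm_eq_abs, abs_of_pos (by positivity)]
    exact inv_lt_one_of_one_lt₀ hs1
  have hy : ‖((s ^ 3)⁻¹ : ℝ)‖ < 1 := by
    rw [Real.norm_eq_abs, abs_of_pos (by positivity)]
    exact inv_lt_one_of_one_lt₀ (by nlinarith)
  -- arctan addition
  have hxy : s⁻¹ * (s ^ 3)⁻¹ < 1 := by
    rw [← inv_pow, ← pow_succ']
    calc (s⁻¹)^4 < 1^4 := by
          apply pow_lt_pow_left₀ (inv_lt_one_of_one_lt₀ hs1) (by positivity)
          norm_num
      _ = 1 := one_pow 4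
  have hdne : (1 : ℝ) - s⁻¹ * (s ^ 3)⁻¹ ≠ 0 := by linarith
  have harc : Real.arctan (s / (s ^ 2 - 1)) =
      Real.arctan s⁻¹ + Real.arctan (s ^ 3)⁻¹ := by
    rw [Real.arctan_add hxy]
    congr 1
    rw [div_eq_div_iff (by nlinarith) hdne]
    field_simp
    ring
  set c : ℝ := (s ^ 2) ^ 2 * s with hc
  -- the two series
  have hF := (Real.hasSum_arctan hx).mul_left c
  have hG := (Real.hasSum_arctan hy).mul_left c
  replace hF := (Nat.divModEquiv 3).symm.hasSum_iff.mpr hF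
  dsimp [Function.comp_def] at hF
  replace hF := hF.prod_fiberwise (g := fun m => ∑ j : Fin 3,
      c * ((-1) ^ (m * 3 + (j : ℕ)) * s⁻¹ ^ (2 * (m * 3 + (j : ℕ)) + 1) /
        ((2 * (m * 3 + (j : ℕ)) + 1 : ℕ) : ℝ)))
    (fun m => hasSum_fintype _)
  have htot := hF.add hG
  rw [← mul_add, ← harc] at htot
  have heq : (fun m : ℕ => (∑ j : Fin 3,
      c * ((-1) ^ (m * 3 + (j : ℕ)) * s⁻¹ ^ (2 * (m * 3 + (j : ℕ)) + 1) /
        ((2 * (m * 3 + (j : ℕ)) + 1 : ℕ) : ℝ)) +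
      c * ((-1) ^ m * (s ^ 3)⁻¹ ^ (2 * m + 1) / ((2 * m + 1 : ℕ) : ℝ)))) =
      fun k : ℕ => (1 / (-(s ^ 2) ^ 3) ^ k) *
        ((s ^ 2) ^ 2 / (6 * (k : ℝ) + 1) + 2 * (s ^ 2) / (6 * (k : ℝ) + 3)
          + 1 / (6 * (k : ℝ) + 5)) := by
    funext m
    have hsm : (-1 : ℝ) ^ (m * 3) = (-1) ^ m := by
      rcases Nat.even_or_odd m with h | h
      · rw [h.neg_one_pow, (h.mul_right 3).neg_one_pow]
      · rw [h.neg_one_pow, (h.mul (Nat.odd_iff.mpr rfl)).neg_one_pow]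
    have htinv : ((-1 : ℝ) ^ m)⁻¹ = (-1) ^ m := by
      rcases Nat.even_or_odd m with h | h
      · simp [h.neg_one_pow]
      · rw [h.neg_one_pow]; norm_num
    have hpow : ∀ j : ℕ, s⁻¹ ^ (6 * m + j) = (((s ^ 2) ^ 3) ^ m)⁻¹ * s⁻¹ ^ j := by
      intro j
      rw [pow_add, inv_pow, ← pow_mul]
      congr 2
      ring
    have hBne : (((s ^ 2) ^ 3) ^ m) ≠ 0 := by positivity
    have hy3 : ((s ^ 3)⁻¹ : ℝ) ^ (2 * m + 1) = (((s ^ 2) ^ 3) ^ m)⁻¹ * s⁻¹ ^ 3 := by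
      rw [← inv_pow, ← pow_mul, show 3 * (2 * m + 1) = 6 * m + 3 by ring, hpow]
    rw [Fin.sum_univ_three]
    simp only [Fin.val_zero, Fin.val_one, Fin.val_two, Pi.add_apply]
    have g1 : (-1 : ℝ) ^ (m * 3 + 1) = -(-1 : ℝ) ^ m := by
      rw [pow_succ, hsm, mul_neg_one]
    have g2 : (-1 : ℝ) ^ (m * 3 + 2) = (-1 : ℝ) ^ m := by
      rw [pow_add, hsm]; norm_num
    rw [show 2 * (m * 3 + 0) + 1 = 6 * m + 1 by ring,
      show 2 * (m * 3 + 1) + 1 = 6 * m + 3 by ring,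
      show 2 * (m * 3 + 2) + 1 = 6 * m + 5 by ring,
      show m * 3 + 0 = m * 3 by ring, hsm, g1, g2,
      hpow 1, hpow 3, hpow 5, hy3,
      show (-(s ^ 2) ^ 3 : ℝ) = (-1) * (s ^ 2) ^ 3 by ring, mul_pow, one_div, mul_inv, htinv]
    have d1 : ((6 * m + 1 : ℕ) : ℝ) ≠ 0 := by positivity
    have d2 : ((6 * m + 3 : ℕ) : ℝ) ≠ 0 := by positivity
    have d3 : ((6 * m + 5 : ℕ) : ℝ) ≠ 0 := by positivity
    have d4 : ((2 * m + 1 : ℕ) : ℝ) ≠ 0 := by positivity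
    push_cast
    have d1' : (6 * (m : ℝ) + 1) ≠ 0 := by positivity
    have d2' : (6 * (m : ℝ) + 3) ≠ 0 := by positivity
    have d3' : (6 * (m : ℝ) + 5) ≠ 0 := by positivity
    have d4' : (2 * (m : ℝ) + 1) ≠ 0 := by positivity
    field_simp
    ring
  rw [heq] at htot
  exact htot.tsum_eq.symm
end

section
/- For every positive integer n, ln( (n² + n + 1)/n² ) = (1/n³) · ∑_{k=0}^∞ (1/(n³)^k) · ( n²/(3k+1) + n/(3k+2) − 2/(3k+3) ). -/
open Real

lemma key (x : ℝ) (hx : |x| < 1) :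
    HasSum (fun k : ℕ => x ^ (3*k+1) / (3*(k:ℝ)+1) + x ^ (3*k+2) / (3*(k:ℝ)+2)
      - 2 * (x ^ (3*k+3) / (3*(k:ℝ)+3))) (Real.log (1 + x + x^2)) := by
  have hx1 : (0:ℝ) < 1 - x := by cases abs_lt.mp hx; linarith
  have hx3' : |x^3| < 1 := by rw [abs_pow]; exact pow_lt_one₀ (abs_nonneg x) hx (by norm_num)
  have hx3 : (0:ℝ) < 1 - x^3 := by cases abs_lt.mp hx3'; linarith
  have h1 := Real.hasSum_pow_div_log_of_abs_lt_one hx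
  have h3 := Real.hasSum_pow_div_log_of_abs_lt_one hx3'
  replace h1 := (Nat.divModEquiv 3).symm.hasSum_iff.mpr h1
  dsimp [Function.comp_def, Nat.divModEquiv] at h1
  have hg : HasSum (fun k : ℕ => x ^ (3*k+1) / (3*(k:ℝ)+1) + x ^ (3*k+2) / (3*(k:ℝ)+2)
      + x ^ (3*k+3) / (3*(k:ℝ)+3)) (-Real.log (1 - x)) := by
    refine h1.prod_fiberwise fun k => ?_
    convert hasSum_fintype (_ : Fin 3 → ℝ) using 1
    rw [Fin.sum_univ_three]
    norm_num [mul_comm k 3]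
    ring_nf
  have h3c : HasSum (fun k : ℕ => 3 * (x ^ (3*k+3) / (3*(k:ℝ)+3))) (-Real.log (1 - x^3)) := by
    refine h3.congr_fun fun k => ?_
    have hk : (3:ℝ)*k+3 ≠ 0 := by positivity
    have hk' : ((k:ℝ)+1) ≠ 0 := by positivity
    have he : (x^3)^(k+1) = x^(3*k+3) := by rw [← pow_mul]; ring_nf
    rw [he]
    field_simp
  have hc := hg.sub h3c
  have : Real.log (1 + x + x^2) = -Real.log (1 - x) - -Real.log (1 - x^3) := by
    rw [show -Real.log (1-x) - -Real.log (1-x^3) = Real.log (1-x^3) - Real.log (1-x) by ring,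
      ← Real.log_div hx3.ne' hx1.ne']
    congr 1
    field_simp
    ring
  rw [this]
  refine hc.congr_fun fun k => ?_
  ring

lemma partial_sum_eq (N : ℕ) :
    ∑ k ∈ Finset.range N, ((1:ℝ)/(3*(k:ℝ)+1) + 1/(3*(k:ℝ)+2) - 2/(3*(k:ℝ)+3))
      = (harmonic (3*N) : ℝ) - (harmonic N : ℝ) := by
  induction N with
  | zero => simp
  | succ n ih =>
    rw [Finset.sum_range_succ, ih, show 3*(n+1) = (3*n+1)+1+1 by ring]
    rw [harmonic_succ, harmonic_succ, harmonic_succ, harmonic_succ]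
    have h3 : (3:ℝ)*n+3 ≠ 0 := by positivity
    have h1 : ((n:ℝ)+1) ≠ 0 := by positivity
    push_cast
    field_simp
    ring

lemma decomp (k : ℕ) : (1:ℝ)/(3*(k:ℝ)+1) + 1/(3*(k:ℝ)+2) - 2/(3*(k:ℝ)+3)
    = 2/((3*(k:ℝ)+1)*(3*(k:ℝ)+3)) + 1/((3*(k:ℝ)+2)*(3*(k:ℝ)+3)) := by
  have h1 : (3:ℝ)*k+1 ≠ 0 := by positivity
  have h2 : (3:ℝ)*k+2 ≠ 0 := by positivity
  have h3 : (3:ℝ)*k+3 ≠ 0 := by positivity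
  field_simp
  ring

lemma log3_hasSum :
    HasSum (fun k : ℕ => (1:ℝ)/(3*(k:ℝ)+1) + 1/(3*(k:ℝ)+2) - 2/(3*(k:ℝ)+3)) (Real.log 3) := by
  set f : ℕ → ℝ := fun k => (1:ℝ)/(3*(k:ℝ)+1) + 1/(3*(k:ℝ)+2) - 2/(3*(k:ℝ)+3) with hf
  have hdecomp : ∀ k : ℕ, f k = 2/((3*(k:ℝ)+1)*(3*(k:ℝ)+3)) + 1/((3*(k:ℝ)+2)*(3*(k:ℝ)+3)) :=
    fun k => decomp k
  have hnn : ∀ k : ℕ, 0 ≤ f k := by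
    intro k; rw [hdecomp]; positivity
  have hle : ∀ k : ℕ, f k ≤ 3 / ((k:ℝ)+1)^2 := by
    intro k
    rw [hdecomp]
    have hk : (0:ℝ) ≤ k := Nat.cast_nonneg k
    have e1 : (2:ℝ)/((3*(k:ℝ)+1)*(3*(k:ℝ)+3)) ≤ 2/((k:ℝ)+1)^2 := by
      apply div_le_div_of_nonneg_left (by norm_num) (by positivity)
      nlinarith
    have e2 : (1:ℝ)/((3*(k:ℝ)+2)*(3*(k:ℝ)+3)) ≤ 1/((k:ℝ)+1)^2 := by
      apply div_le_div_of_nonneg_left (by norm_num) (by positivity)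
      nlinarith
    have : (2:ℝ)/((k:ℝ)+1)^2 + 1/((k:ℝ)+1)^2 = 3/((k:ℝ)+1)^2 := by ring
    linarith
  have hs2 : Summable (fun k : ℕ => 3 / ((k:ℝ)+1)^2) := by
    have h0 : Summable (fun k : ℕ => 1 / ((k:ℝ))^2) :=
      Real.summable_one_div_nat_pow.mpr one_lt_two
    have h1 := ((summable_nat_add_iff 1).mpr h0).mul_left 3
    refine h1.congr fun k => ?_
    push_cast
    ring
  have hsum : Summable f := Summable.of_nonneg_of_le hnn hle hs2
  have h1 : Filter.Tendsto (fun N => ∑ k ∈ Finset.range N, f k) Filter.atTop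
      (nhds (∑' k, f k)) := hsum.hasSum.tendsto_sum_nat
  have h2 : Filter.Tendsto (fun N => ∑ k ∈ Finset.range N, f k) Filter.atTop
      (nhds (Real.log 3)) := by
    have hA : Filter.Tendsto (fun N : ℕ => (harmonic (3*N) : ℝ) - Real.log (3*N))
        Filter.atTop (nhds Real.eulerMascheroniConstant) := by
      have h3N : Filter.Tendsto (fun N : ℕ => 3*N) Filter.atTop Filter.atTop :=
        Filter.tendsto_atTop_mono (fun n => by simp; omega) Filter.tendsto_id
      have := Real.tendsto_harmonic_sub_log.comp h3N
      refine this.congr fun N => ?_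
      simp [Function.comp]
    have hB := Real.tendsto_harmonic_sub_log
    have hC := (hA.sub hB).add_const (Real.log 3)
    rw [sub_self, zero_add] at hC
    refine hC.congr' ?_
    filter_upwards [Filter.eventually_gt_atTop 0] with N hN
    have hN' : (0:ℝ) < N := by exact_mod_cast hN
    rw [partial_sum_eq]
    have : Real.log (3*(N:ℝ)) = Real.log 3 + Real.log N :=
      Real.log_mul (by norm_num) hN'.ne'
    rw [this]
    ring
  exact (tendsto_nhds_unique h1 h2) ▸ hsum.hasSum

theorem stmt_16 (n : ℕ) (hn : 0 < n) :
    Real.log (((n : ℝ) ^ 2 + (n : ℝ) + 1) / (n : ℝ) ^ 2) =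
      (1 / (n : ℝ) ^ 3) * ∑' k : ℕ, (1 / ((n : ℝ) ^ 3) ^ k) *
        ((n : ℝ) ^ 2 / (3 * (k : ℝ) + 1) + (n : ℝ) / (3 * (k : ℝ) + 2)
          - 2 / (3 * (k : ℝ) + 3)) := by
  rcases eq_or_lt_of_le (show 1 ≤ n from hn) with h1 | h2
  · -- n = 1
    subst h1
    norm_num
    rw [← log3_hasSum.tsum_eq]
    norm_num
  · -- 2 ≤ n
    have hn0 : (n:ℝ) ≠ 0 := by positivity
    have hn2 : (2:ℝ) ≤ n := by exact_mod_cast h2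
    have hx : |(n:ℝ)⁻¹| < 1 := by
      rw [abs_of_nonneg (by positivity)]
      rw [inv_lt_one_iff₀]
      right; linarith
    have hkey := key ((n:ℝ)⁻¹) hx
    have hL : ((n:ℝ)^2 + n + 1)/ (n:ℝ)^2 = 1 + (n:ℝ)⁻¹ + ((n:ℝ)⁻¹)^2 := by
      field_simp
    rw [hL, ← hkey.tsum_eq, ← tsum_mul_left]
    refine tsum_congr fun k => ?_
    have d1 : (3:ℝ)*k+1 ≠ 0 := by positivity
    have d2 : (3:ℝ)*k+2 ≠ 0 := by positivity
    have d3 : (3:ℝ)*k+3 ≠ 0 := by positivity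
    have hpk : ((n:ℝ)^3)^k ≠ 0 := by positivity
    simp only [inv_pow]
    field_simp
    ring
end

section
/- For every positive integer n, ln( (2n² + 2n + 1)/(2n²) ) = (1/(2n⁴)) · ∑_{k=0}^∞ (1/(−4n⁴)^k) · ( 2n³/(4k+1) − n/(4k+3) + 1/(4k+4) ). -/
theorem stmt_17 (n : ℕ) (hn : 0 < n) :
    Real.log ((2 * (n : ℝ) ^ 2 + 2 * (n : ℝ) + 1) / (2 * (n : ℝ) ^ 2)) =
      (1 / (2 * (n : ℝ) ^ 4)) * ∑' k : ℕ, (1 / (-(4 * (n : ℝ) ^ 4)) ^ k) *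
        (2 * (n : ℝ) ^ 3 / (4 * (k : ℝ) + 1) - (n : ℝ) / (4 * (k : ℝ) + 3)
          + 1 / (4 * (k : ℝ) + 4)) := by
  have hN1 : (1 : ℝ) ≤ (n : ℝ) := by exact_mod_cast hn
  set N : ℝ := (n : ℝ) with hNdef
  clear_value N
  have hN : (0 : ℝ) < N := lt_of_lt_of_le one_pos hN1
  set z : ℂ := (((2 * N)⁻¹ : ℝ) : ℂ) * (1 - Complex.I) with hzdef
  clear_value z
  have hzre : z.re = (2 * N)⁻¹ := by simp [hzdef]
  have hzim : z.im = -(2 * N)⁻¹ := by simp [hzdef]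
  have hznorm : ‖z‖ < 1 := by
    have h1 : ‖z‖ ^ 2 = (2 * N)⁻¹ ^ 2 * 2 := by
      rw [Complex.sq_norm, Complex.normSq_apply, hzre, hzim]
      ring
    have h2 : ‖z‖ ^ 2 < 1 := by
      rw [h1]
      rw [show ((2:ℝ) * N)⁻¹ ^ 2 * 2 = 2 / (2*N)^2 by ring]
      rw [div_lt_one (by positivity)]
      nlinarith
    nlinarith [norm_nonneg z]
  set c : ℝ := (-(4 * N ^ 4))⁻¹ with hcdef
  clear_value c
  have hc : z ^ 4 = ((c : ℝ) : ℂ) := by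
    apply Complex.ext
    · simp only [pow_succ, pow_zero, one_mul, Complex.mul_re, Complex.mul_im, hzre, hzim]
      rw [hcdef, Complex.ofReal_re]
      field_simp
      ring
    · simp only [pow_succ, pow_zero, one_mul, Complex.mul_re, Complex.mul_im, hzre, hzim]
      rw [Complex.ofReal_im]
      ring
  have H := Complex.hasSum_taylorSeries_log hznorm
  set f : ℕ → ℝ := fun k => 4 * N ^ 4 * ((-1 : ℂ) ^ (k + 1) * z ^ k / (k : ℂ)).re with hfdef
  clear_value f
  have H2 : HasSum f (4 * N ^ 4 * (Complex.log (1 + z)).re) := by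
    simpa [hfdef] using (H.mapL Complex.reCLM).mul_left (4 * N ^ 4)
  have hf0 : f 0 = 0 := by simp [hfdef]
  have H3 : HasSum (fun k => f (k + 1)) (4 * N ^ 4 * (Complex.log (1 + z)).re) := by
    refine (hasSum_nat_add_iff 1).mpr ?_
    simpa [hf0] using H2
  have H4 := (Nat.divModEquiv 4).symm.hasSum_iff.mpr H3
  dsimp [Function.comp_def, Nat.divModEquiv] at H4
  -- general term computation
  have hterm : ∀ (m j : ℕ), f (4 * m + j) =
      4 * N ^ 4 * (c ^ m / (4 * (m : ℝ) + (j : ℝ)) * ((-1 : ℂ) ^ (j + 1) * z ^ j).re) := by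
    intro m j
    have h1 : (-1 : ℂ) ^ (4 * m + j + 1) = (-1) ^ (j + 1) := by
      rw [add_assoc, pow_add, pow_mul]
      norm_num
    have h2 : ((-1 : ℂ) ^ (4 * m + j + 1) * z ^ (4 * m + j) / ((4 * m + j : ℕ) : ℂ))
        = (((c ^ m / (4 * (m : ℝ) + (j : ℝ))) : ℝ) : ℂ) * ((-1 : ℂ) ^ (j + 1) * z ^ j) := by
      rw [h1, show z ^ (4 * m + j) = (((c ^ m : ℝ)) : ℂ) * z ^ j from by
        rw [pow_add, pow_mul, hc]; push_cast; ring]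
      push_cast
      ring
    rw [hfdef]
    dsimp only
    rw [h2, Complex.re_ofReal_mul]
  have hre1 : ((-1 : ℂ) ^ (1 + 1) * z ^ 1).re = (2 * N)⁻¹ := by
    simp [hzre]
  have hre2 : ((-1 : ℂ) ^ (2 + 1) * z ^ 2).re = 0 := by
    simp only [pow_succ, pow_zero, one_mul, Complex.mul_re, Complex.mul_im, hzre, hzim]
    norm_num
  have hre3 : ((-1 : ℂ) ^ (3 + 1) * z ^ 3).re = -(2 * N)⁻¹ ^ 3 * 2 := by
    simp only [pow_succ, pow_zero, one_mul, Complex.mul_re, Complex.mul_im, hzre, hzim]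
    norm_num
    ring
  have hre4 : ((-1 : ℂ) ^ (4 + 1) * z ^ 4).re = -c := by
    rw [hc, show ((-1 : ℂ)) ^ (4 + 1) = -1 by norm_num]
    simp
  have key : ∀ m : ℕ, HasSum (fun j : Fin 4 => f (m * 4 + (j : ℕ) + 1))
      ((1 / (-(4 * N ^ 4)) ^ m) * (2 * N ^ 3 / (4 * (m : ℝ) + 1) - N / (4 * (m : ℝ) + 3)
        + 1 / (4 * (m : ℝ) + 4))) := by
    intro m
    have hcm : (1 : ℝ) / (-(4 * N ^ 4)) ^ m = c ^ m := by
      rw [hcdef, inv_pow, one_div]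
    convert hasSum_fintype (fun j : Fin 4 => f (m * 4 + (j : ℕ) + 1)) using 1
    rw [Fin.sum_univ_four]
    simp only [Fin.val_zero, Fin.val_one, Fin.val_two, show ((3 : Fin 4) : ℕ) = 3 from rfl]
    have t0 : f (m * 4 + 0 + 1) = 4 * N ^ 4 * (c ^ m / (4 * (m : ℝ) + 1) * ((-1 : ℂ) ^ (1 + 1) * z ^ 1).re) := by
      rw [show m * 4 + 0 + 1 = 4 * m + 1 by omega, hterm m 1]; norm_num
    have t1 : f (m * 4 + 1 + 1) = 4 * N ^ 4 * (c ^ m / (4 * (m : ℝ) + 2) * ((-1 : ℂ) ^ (2 + 1) * z ^ 2).re) := by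
      rw [show m * 4 + 1 + 1 = 4 * m + 2 by omega, hterm m 2]; norm_num
    have t2 : f (m * 4 + 2 + 1) = 4 * N ^ 4 * (c ^ m / (4 * (m : ℝ) + 3) * ((-1 : ℂ) ^ (3 + 1) * z ^ 3).re) := by
      rw [show m * 4 + 2 + 1 = 4 * m + 3 by omega, hterm m 3]; norm_num
    have t3 : f (m * 4 + 3 + 1) = 4 * N ^ 4 * (c ^ m / (4 * (m : ℝ) + 4) * ((-1 : ℂ) ^ (4 + 1) * z ^ 4).re) := by
      rw [show m * 4 + 3 + 1 = 4 * m + 4 by omega, hterm m 4]; norm_num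
    rw [t0, t1, t2, t3, hre1, hre2, hre3, hre4, hcm]
    have hNne : N ≠ 0 := ne_of_gt hN
    have ha : 4 * N ^ 4 * (2 * N)⁻¹ = 2 * N ^ 3 := by field_simp; ring
    have hb : 4 * N ^ 4 * (-(2 * N)⁻¹ ^ 3 * 2) = -N := by field_simp; ring
    have hcv : 4 * N ^ 4 * (-c) = 1 := by
      rw [hcdef]
      field_simp
    rw [show (4:ℝ) * N ^ 4 * (c ^ m / (4 * (m : ℝ) + 1) * (2 * N)⁻¹)
          = 4 * N ^ 4 * (2 * N)⁻¹ * (c ^ m / (4 * (m : ℝ) + 1)) from by ring, ha,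
        show (4:ℝ) * N ^ 4 * (c ^ m / (4 * (m : ℝ) + 3) * (-(2 * N)⁻¹ ^ 3 * 2))
          = 4 * N ^ 4 * (-(2 * N)⁻¹ ^ 3 * 2) * (c ^ m / (4 * (m : ℝ) + 3)) from by ring, hb,
        show (4:ℝ) * N ^ 4 * (c ^ m / (4 * (m : ℝ) + 4) * -c)
          = 4 * N ^ 4 * (-c) * (c ^ m / (4 * (m : ℝ) + 4)) from by ring, hcv]
    ring
  have H5 := H4.prod_fiberwise key
  rw [H5.tsum_eq]
  have hre : (Complex.log (1 + z)).re = Real.log ‖1 + z‖ := Complex.log_re _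
  have habs : ‖1 + z‖ ^ 2 = (2 * N ^ 2 + 2 * N + 1) / (2 * N ^ 2) := by
    rw [Complex.sq_norm, Complex.normSq_apply]
    simp only [Complex.add_re, Complex.add_im, Complex.one_re, Complex.one_im, hzre, hzim]
    have hNne : N ≠ 0 := ne_of_gt hN
    field_simp
    ring
  have hlog : Real.log ((2 * N ^ 2 + 2 * N + 1) / (2 * N ^ 2))
      = 2 * Real.log ‖1 + z‖ := by
    rw [← habs, Real.log_pow]
    push_cast
    ring
  rw [hlog, hre]
  have hNne : N ^ 4 ≠ 0 := by positivity
  field_simp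
  ring
end

section
/- For every positive integer n, n · (√n/√2) · ln( (n + √2·√n + 1)/(n − √2·√n + 1) ) = 2 · ∑_{k=0}^∞ (1/(−n²)^k) · ( n/(4k+1) − 1/(4k+3) ). -/
open Filter Finset

lemma denom_pos (t : ℝ) : 0 < t^2 - Real.sqrt 2 * t + 1 := by
  have h : Real.sqrt 2 ^ 2 = 2 := Real.sq_sqrt (by norm_num)
  nlinarith [sq_nonneg (2*t - Real.sqrt 2)]

lemma denom_pos' (t : ℝ) : 0 < t^2 + Real.sqrt 2 * t + 1 := by
  have h : Real.sqrt 2 ^ 2 = 2 := Real.sq_sqrt (by norm_num)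
  nlinarith [sq_nonneg (2*t + Real.sqrt 2)]

lemma hasDeriv_F (s : ℝ) :
    HasDerivAt (fun t : ℝ => (Real.log (t^2 + Real.sqrt 2 * t + 1)
      - Real.log (t^2 - Real.sqrt 2 * t + 1)) / (2 * Real.sqrt 2))
      ((1 - s^2)/(1 + s^4)) s := by
  have h2 : Real.sqrt 2 ^ 2 = 2 := Real.sq_sqrt (by norm_num)
  have hs2 : (0:ℝ) < Real.sqrt 2 := Real.sqrt_pos.mpr (by norm_num)
  have hp : HasDerivAt (fun t : ℝ => t^2 + Real.sqrt 2 * t + 1) (2*s + Real.sqrt 2) s := by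
    have := ((hasDerivAt_pow 2 s).add ((hasDerivAt_id s).const_mul (Real.sqrt 2))).add_const 1
    refine this.congr_deriv ?_
    ring
  have hm : HasDerivAt (fun t : ℝ => t^2 - Real.sqrt 2 * t + 1) (2*s - Real.sqrt 2) s := by
    have := ((hasDerivAt_pow 2 s).sub ((hasDerivAt_id s).const_mul (Real.sqrt 2))).add_const 1
    refine this.congr_deriv ?_
    ring
  have hlp := hp.log (ne_of_gt (denom_pos' s))
  have hlm := hm.log (ne_of_gt (denom_pos s))
  have := (hlp.sub hlm).div_const (2 * Real.sqrt 2)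
  refine this.congr_deriv ?_
  have h1 := ne_of_gt (denom_pos s)
  have h1' := ne_of_gt (denom_pos' s)
  have h4 : (1:ℝ) + s^4 ≠ 0 := by positivity
  rw [div_sub_div _ _ h1' h1, div_div, div_eq_div_iff (mul_ne_zero (mul_ne_zero h1' h1) (by positivity)) h4]
  linear_combination (2*Real.sqrt 2*(1-s^2)*s^2) * h2

lemma integral_g (t : ℝ) :
    ∫ s in (0:ℝ)..t, (1 - s^2)/(1 + s^4) =
      (Real.log (t^2 + Real.sqrt 2 * t + 1) - Real.log (t^2 - Real.sqrt 2 * t + 1))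
        / (2 * Real.sqrt 2) := by
  have key := intervalIntegral.integral_eq_sub_of_hasDerivAt
    (f := fun t : ℝ => (Real.log (t^2 + Real.sqrt 2 * t + 1)
      - Real.log (t^2 - Real.sqrt 2 * t + 1)) / (2 * Real.sqrt 2))
    (a := 0) (b := t)
    (fun s _ => hasDeriv_F s) ?_
  · rw [key]
    norm_num
  · apply Continuous.intervalIntegrable
    apply Continuous.div (by continuity) (by continuity)
    intro x; positivity


lemma partial_int (t : ℝ) (N : ℕ) :
    ∫ s in (0:ℝ)..t, ∑ k ∈ Finset.range N, (-1:ℝ)^k * (s^(4*k) - s^(4*k+2)) =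
      ∑ k ∈ Finset.range N,
        (-1:ℝ)^k * (t^(4*k+1)/(4*(k:ℝ)+1) - t^(4*k+3)/(4*(k:ℝ)+3)) := by
  rw [intervalIntegral.integral_finset_sum]
  · apply Finset.sum_congr rfl
    intro k _
    rw [intervalIntegral.integral_const_mul, intervalIntegral.integral_sub
      (intervalIntegral.intervalIntegrable_pow _) (intervalIntegral.intervalIntegrable_pow _),
      integral_pow, integral_pow]
    push_cast
    ring
  · intro k _
    exact (intervalIntegral.intervalIntegrable_pow _ |>.sub
      (intervalIntegral.intervalIntegrable_pow _)).const_mul _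

lemma term_rw (s : ℝ) (k : ℕ) :
    (-1:ℝ)^k * (s^(4*k) - s^(4*k+2)) = (1 - s^2) * (-s^4)^k := by
  rw [neg_pow, pow_succ, pow_mul]
  ring

lemma tendsto_partial (t : ℝ) (h0 : 0 ≤ t) (h1 : t ≤ 1) :
    Tendsto (fun N => ∑ k ∈ Finset.range N,
        (-1:ℝ)^k * (t^(4*k+1)/(4*(k:ℝ)+1) - t^(4*k+3)/(4*(k:ℝ)+3)))
      atTop (nhds (∫ s in (0:ℝ)..t, (1 - s^2)/(1 + s^4))) := by
  have key : Tendsto (fun N => ∫ s in (0:ℝ)..t,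
      ∑ k ∈ Finset.range N, (-1:ℝ)^k * (s^(4*k) - s^(4*k+2)))
      atTop (nhds (∫ s in (0:ℝ)..t, (1 - s^2)/(1 + s^4))) := by
    apply intervalIntegral.tendsto_integral_filter_of_dominated_convergence
      (bound := fun _ => (2:ℝ))
    · apply Filter.Eventually.of_forall
      intro N
      apply Continuous.aestronglyMeasurable
      continuity
    · apply Filter.Eventually.of_forall
      intro N
      apply Filter.Eventually.of_forall
      intro s hs
      rw [Set.uIoc_of_le h0] at hs
      have hs0 : 0 < s := hs.1
      have hs1 : s ≤ 1 := le_trans hs.2 h1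
      simp only [term_rw, ← Finset.mul_sum]
      have hne : (-s^4 : ℝ) ≠ 1 := by nlinarith [pow_pos hs0 4]
      rw [geom_sum_eq hne]
      rw [Real.norm_eq_abs, abs_mul, abs_div]
      have e1 : |(1:ℝ) - s^2| ≤ 1 := by rw [abs_le]; constructor <;> nlinarith
      have e2 : |(-s^4:ℝ)^N - 1| ≤ 2 := by
        have h5 : |(-s^4:ℝ)^N| ≤ 1 := by
          rw [abs_pow, abs_neg, abs_of_nonneg (by positivity)]
          exact pow_le_one₀ (by positivity) (pow_le_one₀ hs0.le hs1)
        calc |(-s^4:ℝ)^N - 1| ≤ |(-s^4:ℝ)^N| + |(1:ℝ)| := abs_sub _ _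
          _ ≤ 2 := by rw [abs_one]; linarith
      have e3 : (1:ℝ) ≤ |(-s^4:ℝ) - 1| := by
        rw [abs_of_nonpos (by nlinarith)]; nlinarith
      calc |1 - s^2| * (|(-s^4:ℝ)^N - 1| / |(-s^4:ℝ) - 1|)
          ≤ 1 * (2 / 1) :=
            mul_le_mul e1 (div_le_div₀ (by norm_num) e2 (by norm_num) e3)
              (by positivity) (by norm_num)
        _ = 2 := by norm_num
    · apply intervalIntegrable_const
    · apply Filter.Eventually.of_forall
      intro s hs
      rw [Set.uIoc_of_le h0] at hs
      have hs0 : 0 < s := hs.1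
      have hs1 : s ≤ 1 := le_trans hs.2 h1
      simp only [term_rw, ← Finset.mul_sum]
      rcases eq_or_lt_of_le hs1 with h | h
      · subst h
        norm_num
      · have habs : |(-s^4 : ℝ)| < 1 := by
          rw [abs_neg, abs_of_nonneg (by positivity)]
          exact pow_lt_one₀ hs0.le h (by norm_num)
        have hgeo := (hasSum_geometric_of_abs_lt_one habs).tendsto_sum_nat
        have h6 := hgeo.const_mul (1 - s^2)
        convert h6 using 2
        rw [sub_neg_eq_add]
        ring
  simpa only [partial_int] using key

theorem stmt_18 (n : ℕ) (hn : 0 < n) :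
    (n : ℝ) * (Real.sqrt n / Real.sqrt 2) *
        Real.log (((n : ℝ) + Real.sqrt 2 * Real.sqrt n + 1) /
          ((n : ℝ) - Real.sqrt 2 * Real.sqrt n + 1)) =
      2 * ∑' k : ℕ, (1 / (-(n : ℝ) ^ 2) ^ k) *
        ((n : ℝ) / (4 * (k : ℝ) + 1) - 1 / (4 * (k : ℝ) + 3)) := by
  have hn1 : (1:ℝ) ≤ (n:ℝ) := by exact_mod_cast hn
  have hnpos : (0:ℝ) < n := by linarith
  have hn0 : (n:ℝ) ≠ 0 := ne_of_gt hnpos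
  set c : ℝ := Real.sqrt n with hcdef
  have hc2 : c^2 = (n:ℝ) := Real.sq_sqrt hnpos.le
  have hcpos : 0 < c := Real.sqrt_pos.mpr hnpos
  have hc0 : c ≠ 0 := ne_of_gt hcpos
  have hc1 : 1 ≤ c := by
    rw [hcdef]
    rw [show (1:ℝ) = Real.sqrt 1 by simp]
    exact Real.sqrt_le_sqrt hn1
  set t : ℝ := c⁻¹ with htdef
  have ht0 : 0 ≤ t := by positivity
  have ht1 : t ≤ 1 := by
    rw [htdef]
    rw [inv_le_one_iff₀]
    right; exact hc1
  set b : ℕ → ℝ := fun k => (1 / (-(n : ℝ) ^ 2) ^ k) *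
    ((n : ℝ) / (4 * (k : ℝ) + 1) - 1 / (4 * (k : ℝ) + 3)) with hbdef
  set a : ℕ → ℝ := fun k =>
    (-1:ℝ)^k * (t^(4*k+1)/(4*(k:ℝ)+1) - t^(4*k+3)/(4*(k:ℝ)+3)) with hadef
  -- b k = n*c*(a k)
  have hba : ∀ k, b k = (n:ℝ) * c * a k := by
    intro k
    have hk1 : (4*(k:ℝ)+1) ≠ 0 := by positivity
    have hk3 : (4*(k:ℝ)+3) ≠ 0 := by positivity
    have hX : (0:ℝ) < c^(4*k) := by positivity
    have e1 : t^(4*k+1) = 1/(c^(4*k)*c) := by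
      rw [htdef, inv_pow, pow_succ, one_div]
    have e2 : t^(4*k+3) = 1/(c^(4*k)*c^3) := by
      rw [htdef, inv_pow, pow_add, one_div]
    have e3 : (-(n:ℝ)^2)^k = (-1)^k * c^(4*k) := by
      rw [neg_pow, ← hc2, ← pow_mul, ← pow_mul]
      norm_num
      ring_nf
    rw [hbdef, hadef]
    simp only [e1, e2, e3]
    have hcc : (n:ℝ) = c^2 := hc2.symm
    rw [hcc]
    rcases Nat.even_or_odd k with hk | hk
    · rw [hk.neg_one_pow]
      field_simp
    · rw [hk.neg_one_pow]
      field_simp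
  -- summability of b
  have hsum : Summable b := by
    rcases eq_or_lt_of_le hn1 with h1 | h2
    · -- n = 1
      have hb1 : ∀ k, |b k| ≤ 2 * (1/((k:ℝ)+1)^2) := by
        intro k
        have hk1 : (0:ℝ) < 4*(k:ℝ)+1 := by positivity
        have hk3 : (0:ℝ) < 4*(k:ℝ)+3 := by positivity
        have hkk : (0:ℝ) < ((k:ℝ)+1)^2 := by positivity
        rw [hbdef]
        simp only [← h1]
        rw [abs_mul]
        have q1 : |(1:ℝ) / (-1^2)^k| = 1 := by
          norm_num
        rw [q1, one_mul]
        have q2 : (0:ℝ) ≤ 1 / (4 * (k:ℝ) + 1) - 1 / (4 * (k:ℝ) + 3) := by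
          rw [sub_nonneg]
          apply one_div_le_one_div_of_le hk1
          linarith
        rw [abs_of_nonneg q2]
        rw [mul_one_div, div_sub_div _ _ (ne_of_gt hk1) (ne_of_gt hk3), div_le_div_iff₀ (by positivity) hkk]
        ring_nf
        nlinarith [sq_nonneg ((k:ℝ)), (Nat.cast_nonneg k : (0:ℝ) ≤ (k:ℝ))]
      apply Summable.of_abs
      apply Summable.of_nonneg_of_le (fun k => abs_nonneg _) hb1
      apply Summable.mul_left
      have : Summable (fun k : ℕ => 1/((k:ℝ))^2) := by
        rw [Real.summable_one_div_nat_pow]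
        norm_num
      have h3 := (summable_nat_add_iff 1).mpr this
      simpa using h3
    · -- n ≥ 2
      have hb2 : ∀ k, |b k| ≤ (n:ℝ) * ((1/(n:ℝ)^2))^k := by
        intro k
        have hk1 : (0:ℝ) < 4*(k:ℝ)+1 := by positivity
        have hk3 : (0:ℝ) < 4*(k:ℝ)+3 := by positivity
        rw [hbdef, abs_mul]
        have q1 : |(1:ℝ) / (-(n:ℝ)^2)^k| = (1/(n:ℝ)^2)^k := by
          rw [abs_div, abs_one, abs_pow, abs_neg, abs_of_nonneg (by positivity), div_pow, one_pow]
        rw [q1]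
        rw [mul_comm]
        apply mul_le_mul_of_nonneg_right _ (by positivity)
        have p1 : (0:ℝ) ≤ (n:ℝ)/(4*(k:ℝ)+1) := by positivity
        have p2 : (n:ℝ)/(4*(k:ℝ)+1) ≤ (n:ℝ) := by
          rw [div_le_iff₀ hk1]; nlinarith
        have p3 : (0:ℝ) ≤ 1/(4*(k:ℝ)+3) := by positivity
        have p4 : (1:ℝ)/(4*(k:ℝ)+3) ≤ (n:ℝ) := by
          rw [div_le_iff₀ hk3]; nlinarith
        rw [abs_le]
        constructor <;> linarith
      apply Summable.of_abs
      apply Summable.of_nonneg_of_le (fun k => abs_nonneg _) hb2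
      apply Summable.mul_left
      apply summable_geometric_of_lt_one (by positivity)
      rw [div_lt_one (by positivity)]
      nlinarith
  -- identify the tsum
  have hL : ∑' k, b k = (n:ℝ) * c * (∫ s in (0:ℝ)..t, (1 - s^2)/(1 + s^4)) := by
    have h1 := (tendsto_partial t ht0 ht1).const_mul ((n:ℝ)*c)
    have h2 : Tendsto (fun N => ∑ k ∈ Finset.range N, b k) atTop
        (nhds ((n:ℝ) * c * (∫ s in (0:ℝ)..t, (1 - s^2)/(1 + s^4)))) := by
      refine h1.congr fun N => ?_
      rw [Finset.mul_sum]
      exact Finset.sum_congr rfl fun k _ => (hba k).symm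
    exact tendsto_nhds_unique hsum.hasSum.tendsto_sum_nat h2
  rw [hL, integral_g]
  -- final algebra
  have hA : (0:ℝ) < (n:ℝ) + Real.sqrt 2 * c + 1 := by
    have := Real.sqrt_nonneg 2
    positivity
  have hB : (0:ℝ) < (n:ℝ) - Real.sqrt 2 * c + 1 := by
    have := denom_pos c
    rw [hc2] at this
    exact this
  have p1 : t^2 + Real.sqrt 2 * t + 1 = ((n:ℝ) + Real.sqrt 2 * c + 1)/(n:ℝ) := by
    rw [htdef, ← hc2]
    field_simp
    ring
  have p2 : t^2 - Real.sqrt 2 * t + 1 = ((n:ℝ) - Real.sqrt 2 * c + 1)/(n:ℝ) := by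
    rw [htdef, ← hc2]
    field_simp
    ring
  rw [p1, p2, Real.log_div (ne_of_gt hA) hn0, Real.log_div (ne_of_gt hB) hn0,
    Real.log_div (ne_of_gt hA) (ne_of_gt hB)]
  have hs2 : Real.sqrt 2 ≠ 0 := by positivity
  field_simp
  ring
end

section
/- For every positive integer n, ln( (3n² + 3n + 1)/(3n²) ) = (1/(27n⁶)) · ∑_{k=0}^∞ (1/(−27n⁶)^k) · ( 27n⁵/(6k+1) − 9n⁴/(6k+2) + 3n²/(6k+4) − 3n/(6k+5) + 2/(6k+6) ). -/
set_option maxHeartbeats 2000000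

theorem stmt_19 (n : ℕ) (hn : 0 < n) :
    Real.log ((3 * (n : ℝ) ^ 2 + 3 * (n : ℝ) + 1) / (3 * (n : ℝ) ^ 2)) =
      (1 / (27 * (n : ℝ) ^ 6)) * ∑' k : ℕ, (1 / (-(27 * (n : ℝ) ^ 6)) ^ k) *
        (27 * (n : ℝ) ^ 5 / (6 * (k : ℝ) + 1) - 9 * (n : ℝ) ^ 4 / (6 * (k : ℝ) + 2)
          + 3 * (n : ℝ) ^ 2 / (6 * (k : ℝ) + 4) - 3 * (n : ℝ) / (6 * (k : ℝ) + 5)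
          + 2 / (6 * (k : ℝ) + 6)) := by
  have hN : (1:ℝ) ≤ (n:ℝ) := by exact_mod_cast hn
  have hN0 : (0:ℝ) < (n:ℝ) := by linarith
  set N : ℝ := (n:ℝ) with hNdef
  have hs3 : (Real.sqrt 3) ^ 2 = 3 := Real.sq_sqrt (by norm_num)
  have hs0 : 0 < Real.sqrt 3 := Real.sqrt_pos.mpr (by norm_num)
  set s : ℝ := Real.sqrt 3 with hsdef
  have hs1 : 1 < s := by nlinarith
  set p : ℝ := 1 / (s * N) with hpdef
  have hp0 : 0 < p := by positivity
  have hp1 : p < 1 := by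
    rw [hpdef, div_lt_one (by positivity)]
    nlinarith
  set z : ℂ := ⟨-(s*p)/2, p/2⟩ with hzdef
  have hzre : z.re = -(s*p)/2 := rfl
  have hzim : z.im = p/2 := rfl
  have hnormz : ‖z‖ = p := by
    have h1 : ‖z‖^2 = p^2 := by
      rw [Complex.sq_norm, Complex.normSq_apply, hzre, hzim]
      linear_combination (p^2/4) * hs3
    have h2 : 0 ≤ ‖z‖ := norm_nonneg _
    nlinarith [sq_nonneg (‖z‖ - p)]
  have hz1 : ‖z‖ < 1 := by rw [hnormz]; exact hp1
  -- powers of z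
  have hz2 : z^2 = ⟨p^2/2, -(s*p^2)/2⟩ := by
    rw [Complex.ext_iff]
    refine ⟨?_, ?_⟩ <;> simp only [pow_two, Complex.mul_re, Complex.mul_im, hzre, hzim]
    · linear_combination (p^2/4) * hs3
    · ring
  have hz3 : z^3 = ⟨0, p^3⟩ := by
    rw [show z^3 = z^2 * z by ring, hz2, Complex.ext_iff]
    refine ⟨?_, ?_⟩ <;> simp only [Complex.mul_re, Complex.mul_im, hzre, hzim]
    · ring
    · linear_combination (p^3/4) * hs3
  have hz4 : z^4 = ⟨-(p^4)/2, -(s*p^4)/2⟩ := by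
    rw [show z^4 = z^3 * z by ring, hz3, Complex.ext_iff]
    refine ⟨?_, ?_⟩ <;> simp only [Complex.mul_re, Complex.mul_im, hzre, hzim] <;> ring
  have hz5 : z^5 = ⟨s*p^5/2, p^5/2⟩ := by
    rw [show z^5 = z^4 * z by ring, hz4, Complex.ext_iff]
    refine ⟨?_, ?_⟩ <;> simp only [Complex.mul_re, Complex.mul_im, hzre, hzim]
    · ring
    · linear_combination (p^5/4) * hs3
  have hz6 : z^6 = ((-(p^6) : ℝ) : ℂ) := by
    rw [show z^6 = z^5 * z by ring, hz5, Complex.ext_iff]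
    refine ⟨?_, ?_⟩ <;>
      simp only [Complex.mul_re, Complex.mul_im, hzre, hzim, Complex.ofReal_re, Complex.ofReal_im]
    · linear_combination (-(p^6)/4) * hs3
    · ring
  have hs6 : s^6 = 27 := by
    rw [show s^6 = (s^2)^3 by ring, hs3]; norm_num
  have hp6 : -p^6 = 1/(-(27*N^6)) := by
    rw [hpdef]; field_simp; linear_combination hs6
  have e1 : z.re = -(1/(2*N)) := by
    rw [hzre, hpdef]; field_simp
  have e2 : (z^2).re = 1/(6*N^2) := by
    rw [hz2]; show p^2/2 = _; rw [hpdef]; field_simp; linear_combination (-2)*hs3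
  have e3 : (z^3).re = 0 := by rw [hz3]
  have e4 : (z^4).re = -(1/(18*N^4)) := by
    rw [hz4]; show -p^4/2 = _; rw [hpdef]; field_simp
    linear_combination (2*(s^2+3))*hs3
  have e5 : (z^5).re = 1/(18*N^5) := by
    rw [hz5]; show s*p^5/2 = _; rw [hpdef]; field_simp
    linear_combination (-2*(s^2+3))*hs3
  have e6 : (z^6).re = -(1/(27*N^6)) := by
    rw [hz6]; show -p^6 = _; rw [hp6]; ring
  -- real parts of the divided powers
  have key : ∀ q j : ℕ, (z^(q*6+j) / ((q*6+j : ℕ):ℂ)).re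
      = (-(p^6))^q * (z^j).re / ((q*6+j : ℕ):ℝ) := by
    intro q j
    rw [pow_add, pow_mul', hz6, ← Complex.ofReal_pow,
      show ((q*6+j : ℕ):ℂ) = (((q*6+j : ℕ):ℝ):ℂ) by push_cast; ring,
      Complex.div_ofReal_re, Complex.ofReal_mul']
  have key' : ∀ q j : ℕ, (z ^ (q*6+j+1) / ((q*6+j+1 : ℕ):ℂ)).re
      = (-p^6)^q * (z^(j+1)).re / ((q*6+j+1 : ℕ):ℝ) := by
    intro q j; rw [Nat.add_assoc]; exact key q (j+1)
  have key1 : ∀ q : ℕ, (z ^ (q*6+1) / ((q*6+1 : ℕ):ℂ)).re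
      = (-p^6)^q * z.re / ((q*6+1 : ℕ):ℝ) := by
    intro q; simpa using key q 1
  -- the taylor series
  have h1 : HasSum (fun m : ℕ => z^m/m) (-Complex.log (1 - z)) :=
    Complex.hasSum_taylorSeries_neg_log hz1
  have h2 : HasSum (fun m : ℕ => z^(m+1)/((m+1 : ℕ):ℂ)) (-Complex.log (1 - z)) := by
    have h2' : HasSum (fun m : ℕ => z^m/(m:ℂ))
        ((-Complex.log (1 - z)) + ∑ i ∈ Finset.range 1, z^i/(i:ℂ)) := by
      simpa using h1
    exact (hasSum_nat_add_iff (f := fun m : ℕ => z^m/(m:ℂ)) 1).mpr h2'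
  have h3 : HasSum ((fun m : ℕ => z^(m+1)/((m+1 : ℕ):ℂ)) ∘ (Nat.divModEquiv 6).symm)
      (-Complex.log (1 - z)) := ((Nat.divModEquiv 6).symm.hasSum_iff).2 h2
  have h4 : HasSum (fun q : ℕ => ∑ r : Fin 6,
      ((fun m : ℕ => z^(m+1)/((m+1 : ℕ):ℂ)) ∘ (Nat.divModEquiv 6).symm) (q, r))
      (-Complex.log (1 - z)) :=
    HasSum.prod_fiberwise h3 (fun q => hasSum_fintype _)
  have h5 := Complex.hasSum_re h4
  -- identify the real fiber sums with the goal's summand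
  have hFq : ∀ q : ℕ, (1 / (-(27 * N ^ 6)) ^ q) *
        (27 * N ^ 5 / (6 * (q : ℝ) + 1) - 9 * N ^ 4 / (6 * (q : ℝ) + 2)
          + 3 * N ^ 2 / (6 * (q : ℝ) + 4) - 3 * N / (6 * (q : ℝ) + 5)
          + 2 / (6 * (q : ℝ) + 6))
      = (-(54 * N^6)) * (∑ r : Fin 6,
        ((fun m : ℕ => z^(m+1)/((m+1 : ℕ):ℂ)) ∘ (Nat.divModEquiv 6).symm) (q, r)).re := by
    intro q
    rw [Complex.re_sum, Fin.sum_univ_six]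
    simp only [Function.comp_apply, Nat.divModEquiv_symm_apply,
      show ((0:Fin 6):ℕ) = 0 from rfl, show ((1:Fin 6):ℕ) = 1 from rfl,
      show ((2:Fin 6):ℕ) = 2 from rfl, show ((3:Fin 6):ℕ) = 3 from rfl,
      show ((4:Fin 6):ℕ) = 4 from rfl, show ((5:Fin 6):ℕ) = 5 from rfl, add_zero, key', key1]
    norm_num [e1, e2, e3, e4, e5, e6, hp6]
    have hA : ((-(27 * N ^ 6)) ^ q) ≠ 0 :=
      pow_ne_zero _ (neg_ne_zero.mpr (by positivity))
    have hsN : s * N ≠ 0 := by positivity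
    have d1 : (6*(q:ℝ)+1) ≠ 0 := by positivity
    have d2 : (6*(q:ℝ)+2) ≠ 0 := by positivity
    have d4 : (6*(q:ℝ)+4) ≠ 0 := by positivity
    have d5 : (6*(q:ℝ)+5) ≠ 0 := by positivity
    have d6 : (6*(q:ℝ)+6) ≠ 0 := by positivity
    have e1' : ((q:ℝ)*6+1) ≠ 0 := by positivity
    have e2' : ((q:ℝ)*6+1+1) ≠ 0 := by positivity
    have e4' : ((q:ℝ)*6+3+1) ≠ 0 := by positivity
    have e5' : ((q:ℝ)*6+4+1) ≠ 0 := by positivity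
    have e6' : ((q:ℝ)*6+5+1) ≠ 0 := by positivity
    have hN' : N ≠ 0 := by positivity
    rw [show (-((N ^ 6)⁻¹ * (1 / 27)) : ℝ) = (-(27 * N ^ 6))⁻¹ by ring, inv_pow]
    field_simp
    ring
  have h6 := h5.mul_left (-(54*N^6))
  simp only [← hFq] at h6
  rw [h6.tsum_eq]
  have hre : (-Complex.log (1-z)).re = -Real.log ‖1-z‖ := by
    rw [Complex.neg_re, Complex.log_re]
  rw [hre]
  have habs2 : ‖1-z‖ ^ 2 = (3*N^2+3*N+1)/(3*N^2) := by
    rw [Complex.sq_norm, Complex.normSq_apply]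
    simp only [Complex.sub_re, Complex.sub_im, Complex.one_re, Complex.one_im, hzre, hzim]
    rw [hpdef]
    field_simp
    ring_nf
    linear_combination (-1)*hs3
  have hlog : Real.log ((3*N^2+3*N+1)/(3*N^2)) = 2 * Real.log ‖1-z‖ := by
    rw [← habs2, Real.log_pow]
    push_cast
    ring
  rw [hlog]
  have hN' : N ≠ 0 := by positivity
  field_simp
  ring
end
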